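/- Assume b ∈ A(ri(dom(∑_{i=1}^s f_i))) and that problem (P) has at least one solution. Let α_i > 0 (i = 1,…,s) and β > 0, let ℳ = {M_0, M_1, M_2} be (n+m) × (n+m) matrices with T_ℳ well-defined, and let {v^k} be generated by the two-step scheme v^{k+1} = T_ℳ(v^k, v^{k−1}) from given v^0, v^1 ∈ ℝ^{n+m}. If ℳ satisfies Condition-M, then {v^k} converges to a fixed point of 𝒯 ∘ E, and, writing v^k = (x^k, y^k) with x^k ∈ ℝ^n, the sequence {x^k} converges to a solution of problem (P). -/

import Mathlib

open Matrix Filter Topology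

noncomputable section

/-- Spectral norm (largest singular value) of a real matrix. -/
def specNorm {p q : Type*} [Fintype p] [Fintype q] [DecidableEq q]
    (M : Matrix p q ℝ) : ℝ :=
  ‖LinearMap.toContinuousLinearMap (Matrix.toEuclideanLin M)‖

/-- The positive semidefinite square root of a positive semidefinite matrix
(the definition of `Matrix.PosSemidef.sqrt` in the older Mathlib). -/
def psdSqrt {n : Type*} [Fintype n] [DecidableEq n] {A : Matrix n n ℝ}
    (hA : A.PosSemidef) : Matrix n n ℝ :=
  hA.1.eigenvectorUnitary.1 * diagonal ((↑) ∘ Real.sqrt ∘ hA.1.eigenvalues) *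
    (star hA.1.eigenvectorUnitary : Matrix n n ℝ)

/-- Condition-M for a triple of matrices: `M0 = M1 + M2`, `H := M0 + M2` is symmetric
positive definite, and `‖H^{-1/2} M2 H^{-1/2}‖₂ < 1/2` (here `H^{-1/2}` is the positive
semidefinite square root of `H⁻¹`). -/
def ConditionM {d : Type*} [Fintype d] [DecidableEq d] (M0 M1 M2 : Matrix d d ℝ) : Prop :=
  M0 = M1 + M2 ∧ ∃ hH : (M0 + M2).PosDef,
    specNorm (psdSqrt hH.inv.posSemidef * M2 * psdSqrt hH.inv.posSemidef) < 1 / 2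

/-- The cost functional defining the proximity operator `prox_{φ,H}` at input `x`. -/
def proxCost {ι : Type*} [Fintype ι] (φ : (ι → ℝ) → EReal) (H : Matrix ι ι ℝ)
    (x u : ι → ℝ) : EReal :=
  ((((1 : ℝ) / 2) * ((u - x) ⬝ᵥ H.mulVec (u - x)) : ℝ) : EReal) + φ u

/-- `p = prox_{φ,H}(x)`: `p` is the unique minimizer of the prox cost. -/
def IsProx {ι : Type*} [Fintype ι] (φ : (ι → ℝ) → EReal) (H : Matrix ι ι ℝ)
    (x p : ι → ℝ) : Prop :=
  (∀ u, proxCost φ H x p ≤ proxCost φ H x u) ∧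
  ∀ q, (∀ u, proxCost φ H x q ≤ proxCost φ H x u) → q = p

/-- Proper lower semicontinuous convex extended-real-valued function. -/
def ProperConvexLsc {ι : Type*} [Fintype ι] (f : (ι → ℝ) → EReal) : Prop :=
  (∃ x, f x ≠ ⊤) ∧ (∀ x, f x ≠ ⊥) ∧ LowerSemicontinuous f ∧
  ∀ x y : ι → ℝ, ∀ t : ℝ, 0 < t → t < 1 →
    f (t • x + (1 - t) • y) ≤ (t : EReal) * f x + ((1 - t : ℝ) : EReal) * f y

/-- Scaling of an extended-real-valued function by a real constant. -/
def smulF {V : Type*} (c : ℝ) (φ : V → EReal) : V → EReal := fun u => (c : EReal) * φ u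

/-- The conjugate of the indicator of `C = {b}`: `ι_C*(y) = ⟨y, b⟩`. -/
def iotaCstar {m : ℕ} (b : Fin m → ℝ) : (Fin m → ℝ) → EReal :=
  fun y => ((y ⬝ᵥ b : ℝ) : EReal)

variable {s m : ℕ} {n : Fin s → ℕ}

/-- Index type for the concatenated variable `x = (x_1, …, x_s)`. -/
abbrev XIdx (n : Fin s → ℕ) := (i : Fin s) × Fin (n i)

/-- Index type for the full variable `v = (x, y)`. -/
abbrev FIdx (n : Fin s → ℕ) (m : ℕ) := XIdx n ⊕ Fin m

/-- The `i`-th block of a concatenated vector. -/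
def blk (x : XIdx n → ℝ) (i : Fin s) : Fin (n i) → ℝ := fun j => x ⟨i, j⟩

/-- The matrix `A = [A_1 … A_s]`. -/
def bigA (A : ∀ i : Fin s, Matrix (Fin m) (Fin (n i)) ℝ) : Matrix (Fin m) (XIdx n) ℝ :=
  Matrix.of fun r p => A p.1 r p.2

/-- The separable objective `∑ f_i(x_i)`. -/
def objSum (f : ∀ i : Fin s, (Fin (n i) → ℝ) → EReal) (x : XIdx n → ℝ) : EReal :=
  ∑ i, f i (blk x i)

/-- `∑ A_i x_i`. -/
def sumAx (A : ∀ i : Fin s, Matrix (Fin m) (Fin (n i)) ℝ) (x : XIdx n → ℝ) : Fin m → ℝ :=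
  ∑ i, (A i).mulVec (blk x i)

/-- `x` is a solution of problem (P). -/
def IsSolution (f : ∀ i : Fin s, (Fin (n i) → ℝ) → EReal)
    (A : ∀ i : Fin s, Matrix (Fin m) (Fin (n i)) ℝ) (b : Fin m → ℝ)
    (x : XIdx n → ℝ) : Prop :=
  sumAx A x = b ∧ ∀ z : XIdx n → ℝ, sumAx A z = b → objSum f x ≤ objSum f z

/-- `b ∈ A(ri(dom(∑ f_i)))` where `ri` is the relative (intrinsic) interior. -/
def RiCond (f : ∀ i : Fin s, (Fin (n i) → ℝ) → EReal)
    (A : ∀ i : Fin s, Matrix (Fin m) (Fin (n i)) ℝ) (b : Fin m → ℝ) : Prop :=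
  b ∈ (fun x => sumAx A x) '' intrinsicInterior ℝ {x : XIdx n → ℝ | objSum f x ≠ ⊤}

/-- The `x`-part of a full vector. -/
def xpart (v : FIdx n m → ℝ) : XIdx n → ℝ := fun p => v (Sum.inl p)

/-- The `y`-part of a full vector. -/
def ypart (v : FIdx n m → ℝ) : Fin m → ℝ := fun r => v (Sum.inr r)

/-- The function `Φ(x_1,…,x_s,y) = ∑ f_i(x_i) + ι_C*(y)`. -/
def PhiFun (f : ∀ i : Fin s, (Fin (n i) → ℝ) → EReal) (b : Fin m → ℝ)
    (v : FIdx n m → ℝ) : EReal :=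
  objSum f (xpart v) + iotaCstar b (ypart v)

/-- The diagonal matrix `R = diag((β/α_1)I, …, (β/α_s)I, (1/β)I)`. -/
def Rmat (α : Fin s → ℝ) (β : ℝ) : Matrix (FIdx n m) (FIdx n m) ℝ :=
  Matrix.diagonal (Sum.elim (fun p : XIdx n => β / α p.1) fun _ => 1 / β)

/-- The inverse `R⁻¹` of the diagonal matrix `R`. -/
def Rinv (α : Fin s → ℝ) (β : ℝ) : Matrix (FIdx n m) (FIdx n m) ℝ :=
  Matrix.diagonal (Sum.elim (fun p : XIdx n => α p.1 / β) fun _ => β)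

/-- The expansive matrix `E = [[I, −P⁻¹Aᵀ],[βA, I]]`. -/
def Emat (A : ∀ i : Fin s, Matrix (Fin m) (Fin (n i)) ℝ) (α : Fin s → ℝ) (β : ℝ) :
    Matrix (FIdx n m) (FIdx n m) ℝ :=
  Matrix.fromBlocks 1 (-(Matrix.diagonal (fun p : XIdx n => α p.1 / β) * (bigA A)ᵀ))
    (β • bigA A) 1

/-- The skew-symmetric matrix `S_A = [[0, −Aᵀ],[A, 0]]`. -/
def SAmat (A : ∀ i : Fin s, Matrix (Fin m) (Fin (n i)) ℝ) :
    Matrix (FIdx n m) (FIdx n m) ℝ :=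
  Matrix.fromBlocks 0 (-(bigA A)ᵀ) (bigA A) 0

/-- `w = 𝒯(v)`, where `𝒯(x_1,…,x_s,y) = (prox_{(α_1/β)f_1}x_1, …, prox_{(α_s/β)f_s}x_s,
prox_{β ι_C*}y)`. -/
def isT (f : ∀ i : Fin s, (Fin (n i) → ℝ) → EReal) (b : Fin m → ℝ)
    (α : Fin s → ℝ) (β : ℝ) (v w : FIdx n m → ℝ) : Prop :=
  (∀ i, IsProx (smulF (α i / β) (f i)) 1 (blk (xpart v) i) (blk (xpart w) i)) ∧
  IsProx (smulF β (iotaCstar b)) 1 (ypart v) (ypart w)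

/-- `w = T_ℳ(u₁, u₂)`, i.e. `w = 𝒯((E − R⁻¹M₀)w + R⁻¹M₁u₁ + R⁻¹M₂u₂)`. -/
def isTM (f : ∀ i : Fin s, (Fin (n i) → ℝ) → EReal)
    (A : ∀ i : Fin s, Matrix (Fin m) (Fin (n i)) ℝ) (b : Fin m → ℝ)
    (α : Fin s → ℝ) (β : ℝ) (M0 M1 M2 : Matrix (FIdx n m) (FIdx n m) ℝ)
    (u1 u2 w : FIdx n m → ℝ) : Prop :=
  isT f b α β ((Emat A α β - Rinv α β * M0).mulVec w + (Rinv α β * M1).mulVec u1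
    + (Rinv α β * M2).mulVec u2) w

/-- `T_ℳ` is well-defined. -/
def TMWellDefined (f : ∀ i : Fin s, (Fin (n i) → ℝ) → EReal)
    (A : ∀ i : Fin s, Matrix (Fin m) (Fin (n i)) ℝ) (b : Fin m → ℝ)
    (α : Fin s → ℝ) (β : ℝ) (M0 M1 M2 : Matrix (FIdx n m) (FIdx n m) ℝ) : Prop :=
  ∀ u1 u2 : FIdx n m → ℝ, ∃! w, isTM f A b α β M0 M1 M2 u1 u2 w


/-! ### Auxiliary development for the proof -/

set_option linter.unusedSectionVars false
set_option maxHeartbeats 1000000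

section Aux

lemma le_of_forall_unit_lt {a b c : ℝ} (h : ∀ t : ℝ, 0 < t → t < 1 → a ≤ b + t * c) : a ≤ b := by
  by_contra hab
  push_neg at hab
  have hc1 : (0:ℝ) < |c| + 1 := by positivity
  set t : ℝ := min (1/2) ((a - b)/(2*(|c|+1))) with ht
  have ht0 : 0 < t := lt_min (by norm_num) (div_pos (by linarith) (by positivity))
  have ht1 : t < 1 := lt_of_le_of_lt (min_le_left _ _) (by norm_num)
  have htle : t ≤ (a - b)/(2*(|c|+1)) := min_le_right _ _
  have h1 : t * c ≤ t * |c| := mul_le_mul_of_nonneg_left (le_abs_self c) ht0.le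
  have h2 : t * |c| ≤ ((a - b)/(2*(|c|+1))) * |c| :=
    mul_le_mul_of_nonneg_right htle (abs_nonneg c)
  have h3 : ((a - b)/(2*(|c|+1))) * |c| ≤ (a - b)/2 := by
    rw [div_mul_eq_mul_div, div_le_div_iff₀ (by positivity) (by norm_num)]
    nlinarith [abs_nonneg c]
  have := h t ht0 ht1
  linarith

namespace ERealAux

lemma coe_mul_top {c : ℝ} (hc : 0 < c) : (c : EReal) * (⊤ : EReal) = ⊤ :=
  EReal.mul_top_of_pos (by exact_mod_cast hc)

lemma coe_mul_bot {c : ℝ} (hc : 0 < c) : (c : EReal) * (⊥ : EReal) = ⊥ :=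
  EReal.mul_bot_of_pos (by exact_mod_cast hc)

lemma cases (x : EReal) : x = ⊥ ∨ x = ⊤ ∨ ∃ r : ℝ, x = (r : EReal) := by
  by_cases h1 : x = ⊥
  · exact Or.inl h1
  by_cases h2 : x = ⊤
  · exact Or.inr (Or.inl h2)
  · exact Or.inr (Or.inr ⟨x.toReal, (EReal.coe_toReal h2 h1).symm⟩)

lemma coe_mul_ne_bot {c : ℝ} (hc : 0 < c) {x : EReal} (hx : x ≠ ⊥) : (c : EReal) * x ≠ ⊥ := by
  rcases cases x with h | h | ⟨r, rfl⟩
  · exact absurd h hx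
  · rw [h, coe_mul_top hc]; exact top_ne_bot
  · rw [← EReal.coe_mul]; exact EReal.coe_ne_bot _

lemma coe_mul_ne_top {c : ℝ} (hc : 0 < c) {x : EReal} (hx : x ≠ ⊤) : (c : EReal) * x ≠ ⊤ := by
  rcases cases x with h | h | ⟨r, rfl⟩
  · rw [h, coe_mul_bot hc]; exact bot_ne_top
  · exact absurd h hx
  · rw [← EReal.coe_mul]; exact EReal.coe_ne_top _

lemma coe_mul_eq_top {c : ℝ} (hc : 0 < c) {x : EReal} (hx : x = ⊤) : (c : EReal) * x = ⊤ := by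
  rw [hx]; exact coe_mul_top hc

lemma coe_mul_coe (c r : ℝ) : (c : EReal) * (r : EReal) = ((c * r : ℝ) : EReal) :=
  (EReal.coe_mul c r).symm

lemma coe_mul_eq_coe {c : ℝ} (hc : 0 < c) {x : EReal} {r : ℝ} (h : (c : EReal) * x = (r : EReal)) :
    x = ((r / c : ℝ) : EReal) := by
  rcases cases x with h1 | h1 | ⟨u, rfl⟩
  · rw [h1, coe_mul_bot hc] at h; exact absurd h (EReal.bot_ne_coe _)
  · rw [h1, coe_mul_top hc] at h; exact absurd h (EReal.top_ne_coe _)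
  · rw [← EReal.coe_mul] at h
    have h2 : c * u = r := by exact_mod_cast h
    have h3 : u = r / c := by field_simp at h2 ⊢; linarith
    exact_mod_cast congrArg (fun y : ℝ => (y : EReal)) h3

lemma coe_mul_le_coe_mul {c : ℝ} (hc : 0 ≤ c) {x y : EReal} (h : x ≤ y) :
    (c : EReal) * x ≤ (c : EReal) * y := by
  rcases eq_or_lt_of_le hc with hc0 | hc0
  · simp [← hc0]
  rcases cases x with h1 | h1 | ⟨u, rfl⟩
  · rw [h1, coe_mul_bot hc0]; exact bot_le
  · rw [h1] at h; rw [h1, top_le_iff.mp h]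
  rcases cases y with h2 | h2 | ⟨w, rfl⟩
  · rw [h2] at h; exact absurd h (by simp)
  · rw [h2, coe_mul_top hc0]; exact le_top
  · rw [← EReal.coe_mul, ← EReal.coe_mul]
    exact_mod_cast mul_le_mul_of_nonneg_left (by exact_mod_cast h) hc

lemma distrib3 {c t u : ℝ} (hc : 0 < c) (ht : 0 < t) (hu : 0 < u) {a b : EReal}
    (ha : a ≠ ⊥) (hb : b ≠ ⊥) :
    (c : EReal) * ((t : EReal) * a + (u : EReal) * b)
      = (t : EReal) * ((c : EReal) * a) + (u : EReal) * ((c : EReal) * b) := by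
  rcases cases a with h | h | ⟨r, rfl⟩
  · exact absurd h ha
  · subst h
    rw [coe_mul_top ht, coe_mul_top hc, coe_mul_top ht,
      EReal.top_add_of_ne_bot (coe_mul_ne_bot hu hb), coe_mul_top hc,
      EReal.top_add_of_ne_bot (coe_mul_ne_bot hu (coe_mul_ne_bot hc hb))]
  rcases cases b with h | h | ⟨w, rfl⟩
  · exact absurd h hb
  · subst h
    rw [coe_mul_top hu, coe_mul_top hc, coe_mul_top hu,
      EReal.add_top_of_ne_bot (coe_mul_ne_bot ht (EReal.coe_ne_bot _)),
      coe_mul_top hc,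
      EReal.add_top_of_ne_bot (coe_mul_ne_bot ht (coe_mul_ne_bot hc (EReal.coe_ne_bot _)))]
  · have hr : c * (t * r + u * w) = t * (c * r) + u * (c * w) := by ring
    rw [coe_mul_coe t r, coe_mul_coe u w, ← EReal.coe_add, coe_mul_coe,
      coe_mul_coe c r, coe_mul_coe c w, coe_mul_coe t (c * r), coe_mul_coe u (c * w),
      ← EReal.coe_add, hr]

lemma sum_coe {γ : Type*} (s : Finset γ) (g : γ → ℝ) :
    (∑ i ∈ s, ((g i : ℝ) : EReal)) = ((∑ i ∈ s, g i : ℝ) : EReal) := by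
  classical
  induction s using Finset.cons_induction with
  | empty => simp
  | cons a s ha ih => rw [Finset.sum_cons, Finset.sum_cons, ih, ← EReal.coe_add]

lemma sum_ne_bot {γ : Type*} (s : Finset γ) (F : γ → EReal) (hbot : ∀ i ∈ s, F i ≠ ⊥) :
    (∑ i ∈ s, F i) ≠ ⊥ := by
  classical
  induction s using Finset.cons_induction with
  | empty => simp
  | cons a s ha ih =>
    rw [Finset.sum_cons]
    intro h
    rcases EReal.add_eq_bot_iff.mp h with h' | h'
    · exact hbot a (Finset.mem_cons_self a s) h'
    · exact ih (fun i hi => hbot i (Finset.mem_cons_of_mem hi)) h'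

lemma sum_eq_top {γ : Type*} (s : Finset γ) (F : γ → EReal) (hbot : ∀ i ∈ s, F i ≠ ⊥)
    {i₀ : γ} (hi₀ : i₀ ∈ s) (htop : F i₀ = ⊤) : (∑ i ∈ s, F i) = ⊤ := by
  classical
  rw [← Finset.add_sum_erase s F hi₀, htop]
  exact EReal.top_add_of_ne_bot
    (sum_ne_bot _ _ fun i hi => hbot i (Finset.mem_of_mem_erase hi))

end ERealAux

end Aux

section ProxChar

variable {ι : Type*} [Fintype ι] [DecidableEq ι]

lemma dot_self_nonneg (v : ι → ℝ) : 0 ≤ v ⬝ᵥ v :=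
  Finset.sum_nonneg fun i _ => mul_self_nonneg (v i)

lemma quad_identity (x p u : ι → ℝ) :
    (u - x) ⬝ᵥ (u - x) =
      (p - x) ⬝ᵥ (p - x) + 2 * ((p - x) ⬝ᵥ (u - p)) + (u - p) ⬝ᵥ (u - p) := by
  have h : u - x = (p - x) + (u - p) := by abel
  rw [h, add_dotProduct, dotProduct_add, dotProduct_add, dotProduct_comm (u - p) (p - x)]
  ring

lemma proxCost_one (φ : (ι → ℝ) → EReal) (x u : ι → ℝ) :
    proxCost φ 1 x u = ((((1:ℝ)/2) * ((u - x) ⬝ᵥ (u - x)) : ℝ) : EReal) + φ u := by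
  rw [proxCost, Matrix.one_mulVec]

theorem isProx_iff_subgrad (φ : (ι → ℝ) → EReal)
    (hconv : ∀ x y : ι → ℝ, ∀ t : ℝ, 0 < t → t < 1 →
      φ (t • x + (1 - t) • y) ≤ (t : EReal) * φ x + ((1 - t : ℝ) : EReal) * φ y)
    (hprop : ∃ z, φ z ≠ ⊤) (hbot : ∀ z, φ z ≠ ⊥) (x p : ι → ℝ) :
    IsProx φ 1 x p ↔ (φ p ≠ ⊤ ∧
      ∀ u, (((φ p).toReal + (x - p) ⬝ᵥ (u - p) : ℝ) : EReal) ≤ φ u) := by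
  constructor
  · rintro ⟨hmin, -⟩
    obtain ⟨z0, hz0⟩ := hprop
    have hz0r : φ z0 = ((φ z0).toReal : EReal) := (EReal.coe_toReal hz0 (hbot z0)).symm
    have hp_ne_top : φ p ≠ ⊤ := by
      intro htop
      have h1 : proxCost φ 1 x p = ⊤ := by
        rw [proxCost_one, htop]
        exact EReal.add_top_of_ne_bot (EReal.coe_ne_bot _)
      have h2 := hmin z0
      rw [h1, top_le_iff, proxCost_one, hz0r, ← EReal.coe_add] at h2
      exact EReal.coe_ne_top _ h2
    refine ⟨hp_ne_top, fun u => ?_⟩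
    set r : ℝ := (φ p).toReal with hr
    have hpr : φ p = (r : EReal) := (EReal.coe_toReal hp_ne_top (hbot p)).symm
    by_cases hu : φ u = ⊤
    · rw [hu]; exact le_top
    set s : ℝ := (φ u).toReal with hs
    have hur : φ u = (s : EReal) := (EReal.coe_toReal hu (hbot u)).symm
    rw [hur, EReal.coe_le_coe_iff]
    set A : ℝ := (p - x) ⬝ᵥ (u - p) with hA
    set B : ℝ := (u - p) ⬝ᵥ (u - p) with hB
    have hxp : (x - p) ⬝ᵥ (u - p) = -A := by
      rw [hA, ← neg_dotProduct, neg_sub]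
    rw [hxp]
    apply le_of_forall_unit_lt (c := B / 2)
    intro t ht0 ht1
    set ut : ι → ℝ := t • u + (1 - t) • p with hut
    have hutp : ut - p = t • (u - p) := by
      rw [hut]; module
    have h2 := hmin ut
    have h1 : φ ut ≤ ((t * s + (1 - t) * r : ℝ) : EReal) := by
      calc φ ut ≤ (t : EReal) * φ u + ((1 - t : ℝ) : EReal) * φ p := hconv u p t ht0 ht1
      _ = ((t * s + (1 - t) * r : ℝ) : EReal) := by
          rw [hur, hpr, ← EReal.coe_mul, ← EReal.coe_mul, ← EReal.coe_add]
    rw [proxCost_one, proxCost_one, hpr, ← EReal.coe_add] at h2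
    have h3 : ((((1:ℝ)/2) * ((ut - x) ⬝ᵥ (ut - x)) : ℝ) : EReal) + φ ut ≤
        ((((1:ℝ)/2) * ((ut - x) ⬝ᵥ (ut - x)) + (t * s + (1 - t) * r) : ℝ) : EReal) := by
      rw [EReal.coe_add]
      exact add_le_add_right h1 _
    have h4 := le_trans h2 h3
    rw [EReal.coe_le_coe_iff] at h4
    have hq : (ut - x) ⬝ᵥ (ut - x) = (p - x) ⬝ᵥ (p - x) + 2 * (t * A) + t^2 * B := by
      rw [quad_identity x p ut, hutp, dotProduct_smul, smul_dotProduct, dotProduct_smul]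
      simp only [smul_eq_mul]
      ring
    rw [hq] at h4
    have h5 : 0 ≤ t * (A + (t/2) * B + s - r) := by nlinarith
    have h6 : 0 ≤ A + (t/2) * B + s - r := nonneg_of_mul_nonneg_right h5 ht0
    linarith
  · rintro ⟨hp_ne_top, hsub⟩
    set r : ℝ := (φ p).toReal with hr
    have hpr : φ p = (r : EReal) := (EReal.coe_toReal hp_ne_top (hbot p)).symm
    have keyineq : ∀ u, ((((1:ℝ)/2) * ((p - x) ⬝ᵥ (p - x)) + r
          + ((1:ℝ)/2) * ((u - p) ⬝ᵥ (u - p)) : ℝ) : EReal) ≤ proxCost φ 1 x u := by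
      intro u
      rw [proxCost_one]
      calc ((((1:ℝ)/2) * ((p - x) ⬝ᵥ (p - x)) + r + ((1:ℝ)/2) * ((u - p) ⬝ᵥ (u - p)) : ℝ) : EReal)
          = ((((1:ℝ)/2) * ((u - x) ⬝ᵥ (u - x)) : ℝ) : EReal)
            + ((r + (x - p) ⬝ᵥ (u - p) : ℝ) : EReal) := by
            rw [← EReal.coe_add]
            norm_cast
            rw [quad_identity x p u]
            have h7 : (x - p) ⬝ᵥ (u - p) = -((p - x) ⬝ᵥ (u - p)) := by
              rw [← neg_dotProduct, neg_sub]
            rw [h7]; ring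
        _ ≤ ((((1:ℝ)/2) * ((u - x) ⬝ᵥ (u - x)) : ℝ) : EReal) + φ u :=
            add_le_add_right (hsub u) _
    have hcostp : proxCost φ 1 x p = ((((1:ℝ)/2) * ((p - x) ⬝ᵥ (p - x)) + r : ℝ) : EReal) := by
      rw [proxCost_one, hpr, ← EReal.coe_add]
    constructor
    · intro u
      refine le_trans (le_of_eq hcostp) (le_trans ?_ (keyineq u))
      rw [EReal.coe_le_coe_iff]
      have := dot_self_nonneg (u - p)
      linarith
    · intro q hq
      have h1 := hq p
      rw [hcostp] at h1
      have h2 := le_trans (keyineq q) h1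
      rw [EReal.coe_le_coe_iff] at h2
      have h3 : (q - p) ⬝ᵥ (q - p) ≤ 0 := by linarith
      have h4 : (q - p) ⬝ᵥ (q - p) = 0 := le_antisymm h3 (dot_self_nonneg _)
      exact sub_eq_zero.mp (dotProduct_self_eq_zero.mp h4)

/-- Forward extraction: an `IsProx` fact for a scaled proper convex function yields a real
subgradient inequality. -/
lemma block_subgrad {f : (ι → ℝ) → EReal} (hf : ProperConvexLsc f)
    {c : ℝ} (hc : 0 < c) {x p : ι → ℝ} (h : IsProx (smulF c f) 1 x p) :
    f p ≠ ⊤ ∧ ∀ u, f u ≠ ⊤ →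
      (f p).toReal + (1/c) * ((x - p) ⬝ᵥ (u - p)) ≤ (f u).toReal := by
  obtain ⟨hfin, hfbot, hlsc, hfconv⟩ := hf
  have hφbot : ∀ z, smulF c f z ≠ ⊥ := fun z => ERealAux.coe_mul_ne_bot hc (hfbot z)
  have hφconv : ∀ x' y' : ι → ℝ, ∀ t : ℝ, 0 < t → t < 1 →
      smulF c f (t • x' + (1 - t) • y') ≤ (t : EReal) * smulF c f x'
        + ((1 - t : ℝ) : EReal) * smulF c f y' := by
    intro x' y' t ht0 ht1
    have h1 : smulF c f (t • x' + (1 - t) • y')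
        ≤ (c : EReal) * ((t : EReal) * f x' + ((1 - t : ℝ) : EReal) * f y') :=
      ERealAux.coe_mul_le_coe_mul hc.le (hfconv x' y' t ht0 ht1)
    rw [ERealAux.distrib3 hc ht0 (by linarith) (hfbot x') (hfbot y')] at h1
    exact h1
  have hφprop : ∃ z, smulF c f z ≠ ⊤ := by
    obtain ⟨z, hz⟩ := hfin
    exact ⟨z, ERealAux.coe_mul_ne_top hc hz⟩
  rw [isProx_iff_subgrad _ hφconv hφprop hφbot] at h
  obtain ⟨hpt, hsub⟩ := h
  have hfp_ne_top : f p ≠ ⊤ := fun ht => hpt (ERealAux.coe_mul_eq_top hc ht)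
  have hfp : f p = (((f p).toReal : ℝ) : EReal) := (EReal.coe_toReal hfp_ne_top (hfbot p)).symm
  have hφp : smulF c f p = ((c * (f p).toReal : ℝ) : EReal) := by
    simp only [smulF]
    rw [← ERealAux.coe_mul_coe, ← hfp]
  have hφpt : (smulF c f p).toReal = c * (f p).toReal := by rw [hφp, EReal.toReal_coe]
  refine ⟨hfp_ne_top, fun u hu => ?_⟩
  have hfu : f u = (((f u).toReal : ℝ) : EReal) := (EReal.coe_toReal hu (hfbot u)).symm
  have hφu : smulF c f u = ((c * (f u).toReal : ℝ) : EReal) := by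
    simp only [smulF]
    rw [← ERealAux.coe_mul_coe, ← hfu]
  have h2 := hsub u
  rw [hφpt, hφu, EReal.coe_le_coe_iff] at h2
  have hc' : c ≠ 0 := ne_of_gt hc
  have h3 := mul_le_mul_of_nonneg_left h2 (le_of_lt (by positivity : (0:ℝ) < 1/c))
  have e1 : (1/c) * (c * (f p).toReal + (x - p) ⬝ᵥ (u - p))
      = (f p).toReal + (1/c) * ((x - p) ⬝ᵥ (u - p)) := by field_simp <;> ring
  have e2 : (1/c) * (c * (f u).toReal) = (f u).toReal := by field_simp <;> ring
  rw [e1, e2] at h3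
  exact h3

/-- Converse construction of an `IsProx` fact from a real subgradient inequality. -/
lemma block_subgrad_isProx {f : (ι → ℝ) → EReal} (hf : ProperConvexLsc f)
    {c : ℝ} (hc : 0 < c) {x p : ι → ℝ} (hp : f p ≠ ⊤)
    (hsub : ∀ u, f u ≠ ⊤ →
      (f p).toReal + (1/c) * ((x - p) ⬝ᵥ (u - p)) ≤ (f u).toReal) :
    IsProx (smulF c f) 1 x p := by
  obtain ⟨hfin, hfbot, hlsc, hfconv⟩ := hf
  have hφbot : ∀ z, smulF c f z ≠ ⊥ := fun z => ERealAux.coe_mul_ne_bot hc (hfbot z)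
  have hφconv : ∀ x' y' : ι → ℝ, ∀ t : ℝ, 0 < t → t < 1 →
      smulF c f (t • x' + (1 - t) • y') ≤ (t : EReal) * smulF c f x'
        + ((1 - t : ℝ) : EReal) * smulF c f y' := by
    intro x' y' t ht0 ht1
    have h1 : smulF c f (t • x' + (1 - t) • y')
        ≤ (c : EReal) * ((t : EReal) * f x' + ((1 - t : ℝ) : EReal) * f y') :=
      ERealAux.coe_mul_le_coe_mul hc.le (hfconv x' y' t ht0 ht1)
    rw [ERealAux.distrib3 hc ht0 (by linarith) (hfbot x') (hfbot y')] at h1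
    exact h1
  have hφprop : ∃ z, smulF c f z ≠ ⊤ := by
    obtain ⟨z, hz⟩ := hfin
    exact ⟨z, ERealAux.coe_mul_ne_top hc hz⟩
  rw [isProx_iff_subgrad _ hφconv hφprop hφbot]
  have hfp : f p = (((f p).toReal : ℝ) : EReal) := (EReal.coe_toReal hp (hfbot p)).symm
  have hφp : smulF c f p = ((c * (f p).toReal : ℝ) : EReal) := by
    simp only [smulF]
    rw [← ERealAux.coe_mul_coe, ← hfp]
  have hφpt : (smulF c f p).toReal = c * (f p).toReal := by rw [hφp, EReal.toReal_coe]
  refine ⟨fun ht => EReal.coe_ne_top _ (hφp ▸ ht), fun u => ?_⟩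
  by_cases hu : f u = ⊤
  · have : smulF c f u = ⊤ := ERealAux.coe_mul_eq_top hc hu
    rw [this]; exact le_top
  have hfu : f u = (((f u).toReal : ℝ) : EReal) := (EReal.coe_toReal hu (hfbot u)).symm
  have hφu : smulF c f u = ((c * (f u).toReal : ℝ) : EReal) := by
    simp only [smulF]
    rw [← ERealAux.coe_mul_coe, ← hfu]
  rw [hφpt, hφu, EReal.coe_le_coe_iff]
  have h2 := hsub u hu
  have hc' : c ≠ 0 := ne_of_gt hc
  have h3 := mul_le_mul_of_nonneg_left h2 hc.le
  have e1 : c * ((f p).toReal + 1/c * ((x - p) ⬝ᵥ (u - p)))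
      = c * (f p).toReal + (x - p) ⬝ᵥ (u - p) := by field_simp <;> ring
  rw [e1] at h3
  exact h3

end ProxChar

section LinearProx

variable {μ : ℕ}

lemma isProx_linear_iff {b : Fin μ → ℝ} {β : ℝ} (hβ : 0 < β) (x p : Fin μ → ℝ) :
    IsProx (smulF β (iotaCstar b)) 1 x p ↔ x - p = β • b := by
  have hval : ∀ z, smulF β (iotaCstar b) z = ((β * (z ⬝ᵥ b) : ℝ) : EReal) := by
    intro z
    simp only [smulF, iotaCstar]
    rw [ERealAux.coe_mul_coe]
  have hconv : ∀ x' y' : Fin μ → ℝ, ∀ t : ℝ, 0 < t → t < 1 →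
      smulF β (iotaCstar b) (t • x' + (1 - t) • y') ≤ (t : EReal) * smulF β (iotaCstar b) x'
        + ((1 - t : ℝ) : EReal) * smulF β (iotaCstar b) y' := by
    intro x' y' t ht0 ht1
    rw [hval, hval, hval, ERealAux.coe_mul_coe, ERealAux.coe_mul_coe, ← EReal.coe_add,
      EReal.coe_le_coe_iff, add_dotProduct, smul_dotProduct, smul_dotProduct]
    simp only [smul_eq_mul]
    exact le_of_eq (by ring)
  have hprop : ∃ z, smulF β (iotaCstar b) z ≠ ⊤ := ⟨0, by rw [hval]; exact EReal.coe_ne_top _⟩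
  have hbot : ∀ z, smulF β (iotaCstar b) z ≠ ⊥ := fun z => by rw [hval]; exact EReal.coe_ne_bot _
  rw [isProx_iff_subgrad _ hconv hprop hbot]
  have hpt : (smulF β (iotaCstar b) p).toReal = β * (p ⬝ᵥ b) := by rw [hval, EReal.toReal_coe]
  constructor
  · rintro ⟨-, hsub⟩
    have key : ∀ z : Fin μ → ℝ, (x - p - β • b) ⬝ᵥ z ≤ 0 := by
      intro z
      have h1 := hsub (p + z)
      simp only [hval] at h1
      rw [EReal.toReal_coe, EReal.coe_le_coe_iff] at h1
      have h2 : p + z - p = z := by abel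
      rw [h2, add_dotProduct] at h1
      have h3 : (x - p - β • b) ⬝ᵥ z = (x - p) ⬝ᵥ z - β * (b ⬝ᵥ z) := by
        rw [sub_dotProduct, smul_dotProduct]; simp [smul_eq_mul]
      rw [h3, dotProduct_comm b z]
      linarith
    have h4 := key (x - p - β • b)
    have h5 : (x - p - β • b) ⬝ᵥ (x - p - β • b) = 0 :=
      le_antisymm h4 (dot_self_nonneg _)
    exact sub_eq_zero.mp (dotProduct_self_eq_zero.mp h5)
  · intro hxp
    refine ⟨by rw [hval]; exact EReal.coe_ne_top _, fun u => ?_⟩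
    simp only [hval]
    rw [EReal.toReal_coe, EReal.coe_le_coe_iff, hxp, smul_dotProduct]
    have hb : b ⬝ᵥ (u - p) = u ⬝ᵥ b - p ⬝ᵥ b := by
      rw [dotProduct_comm, sub_dotProduct]
    simp only [smul_eq_mul]
    rw [hb]
    exact le_of_eq (by ring)

end LinearProx

section BlockComp

lemma dot_sum_split (u v : FIdx n m → ℝ) :
    u ⬝ᵥ v = (xpart u) ⬝ᵥ (xpart v) + (ypart u) ⬝ᵥ (ypart v) := by
  rw [dotProduct, Fintype.sum_sum_type]; rfl

lemma dotX_blocks (a c : XIdx n → ℝ) : a ⬝ᵥ c = ∑ i, (blk a i) ⬝ᵥ (blk c i) := by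
  rw [dotProduct, ← Finset.univ_sigma_univ, Finset.sum_sigma]; rfl

lemma bigA_mulVec (A : ∀ i : Fin s, Matrix (Fin m) (Fin (n i)) ℝ) (x : XIdx n → ℝ) :
    (bigA A).mulVec x = sumAx A x := by
  funext r
  rw [Matrix.mulVec, dotProduct, ← Finset.univ_sigma_univ, Finset.sum_sigma, sumAx,
    Finset.sum_apply]
  rfl

lemma dot_mulVec_transpose {a b : Type*} [Fintype a] [Fintype b]
    (M : Matrix a b ℝ) (x : b → ℝ) (y : a → ℝ) :
    (M.mulVec x) ⬝ᵥ y = x ⬝ᵥ (Mᵀ.mulVec y) := by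
  rw [dotProduct_comm, Matrix.dotProduct_mulVec, Matrix.mulVec_transpose, dotProduct_comm]

lemma Rmat_mulVec (α : Fin s → ℝ) (β : ℝ) (z : FIdx n m → ℝ) :
    (Rmat (n := n) α β).mulVec z = Sum.elim
      (fun p : XIdx n => (β / α p.1) * z (Sum.inl p))
      (fun r : Fin m => (1/β) * z (Sum.inr r)) := by
  funext q
  rw [Rmat, Matrix.mulVec_diagonal]
  cases q <;> rfl

lemma Rinv_mulVec (α : Fin s → ℝ) (β : ℝ) (z : FIdx n m → ℝ) :
    (Rinv (n := n) α β).mulVec z = Sum.elim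
      (fun p : XIdx n => (α p.1 / β) * z (Sum.inl p))
      (fun r : Fin m => β * z (Sum.inr r)) := by
  funext q
  rw [Rinv, Matrix.mulVec_diagonal]
  cases q <;> rfl

lemma Emat_mulVec (A : ∀ i : Fin s, Matrix (Fin m) (Fin (n i)) ℝ) (α : Fin s → ℝ) (β : ℝ)
    (v : FIdx n m → ℝ) :
    (Emat A α β).mulVec v = Sum.elim
      (fun q : XIdx n => v (Sum.inl q) - (α q.1 / β) * (((bigA A)ᵀ).mulVec (ypart v)) q)
      (fun r : Fin m => β * ((bigA A).mulVec (xpart v)) r + v (Sum.inr r)) := by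
  funext q
  cases q with
  | inl p =>
    simp only [Emat, Matrix.fromBlocks_mulVec, Sum.elim_inl, Pi.add_apply,
      Matrix.one_mulVec, Matrix.neg_mulVec, Pi.neg_apply, ← Matrix.mulVec_mulVec,
      Matrix.mulVec_diagonal, ypart, xpart, Function.comp_def]
    rw [sub_eq_add_neg]
    rfl
  | inr r =>
    simp only [Emat, Matrix.fromBlocks_mulVec, Sum.elim_inr, Pi.add_apply,
      Matrix.one_mulVec, Matrix.smul_mulVec, Pi.smul_apply, smul_eq_mul,
      xpart, ypart, Function.comp_def]
    rfl

lemma SAmat_mulVec (A : ∀ i : Fin s, Matrix (Fin m) (Fin (n i)) ℝ) (v : FIdx n m → ℝ) :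
    (SAmat A).mulVec v = Sum.elim
      (fun q : XIdx n => -((((bigA A)ᵀ).mulVec (ypart v)) q))
      (fun r : Fin m => ((bigA A).mulVec (xpart v)) r) := by
  funext q
  cases q with
  | inl p =>
    simp only [SAmat, Matrix.fromBlocks_mulVec, Sum.elim_inl, Pi.add_apply,
      Matrix.zero_mulVec, Matrix.neg_mulVec, Pi.neg_apply, Pi.zero_apply, zero_add,
      ypart, Function.comp_def]
    rfl
  | inr r =>
    simp only [SAmat, Matrix.fromBlocks_mulVec, Sum.elim_inr, Pi.add_apply,
      Matrix.zero_mulVec, Pi.zero_apply, add_zero, xpart, Function.comp_def]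
    rfl

lemma RE_eq_SA {A : ∀ i : Fin s, Matrix (Fin m) (Fin (n i)) ℝ} {α : Fin s → ℝ} {β : ℝ}
    (hα : ∀ i, 0 < α i) (hβ : 0 < β) (w : FIdx n m → ℝ) :
    (Rmat (n := n) α β).mulVec ((Emat A α β).mulVec w - w) = (SAmat A).mulVec w := by
  rw [Rmat_mulVec, SAmat_mulVec]
  funext q
  cases q with
  | inl p =>
    simp only [Sum.elim_inl, Pi.sub_apply, Emat_mulVec]
    have h1 : α p.1 ≠ 0 := ne_of_gt (hα p.1)
    have h2 : β ≠ 0 := ne_of_gt hβ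
    field_simp
    ring
  | inr r =>
    simp only [Sum.elim_inr, Pi.sub_apply, Emat_mulVec]
    have h2 : β ≠ 0 := ne_of_gt hβ
    field_simp
    ring

lemma RRinv_mulVec {α : Fin s → ℝ} {β : ℝ} (hα : ∀ i, 0 < α i) (hβ : 0 < β)
    (z : FIdx n m → ℝ) :
    (Rmat (n := n) α β).mulVec ((Rinv α β).mulVec z) = z := by
  rw [Rmat_mulVec, Rinv_mulVec]
  funext q
  cases q with
  | inl p =>
    simp only [Sum.elim_inl]
    have h1 : α p.1 ≠ 0 := ne_of_gt (hα p.1)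
    have h2 : β ≠ 0 := ne_of_gt hβ
    field_simp
  | inr r =>
    simp only [Sum.elim_inr]
    have h2 : β ≠ 0 := ne_of_gt hβ
    field_simp

lemma SA_skew (A : ∀ i : Fin s, Matrix (Fin m) (Fin (n i)) ℝ) (z : FIdx n m → ℝ) :
    ((SAmat A).mulVec z) ⬝ᵥ z = 0 := by
  rw [SAmat_mulVec, dot_sum_split]
  show (fun q : XIdx n => -((((bigA A)ᵀ).mulVec (ypart z)) q)) ⬝ᵥ (xpart z)
    + ((bigA A).mulVec (xpart z)) ⬝ᵥ (ypart z) = 0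
  have h1 : (fun q : XIdx n => -((((bigA A)ᵀ).mulVec (ypart z)) q))
      = -(((bigA A)ᵀ).mulVec (ypart z)) := rfl
  rw [h1, neg_dotProduct, dot_mulVec_transpose (bigA A) (xpart z) (ypart z)]
  have h2 : (((bigA A)ᵀ).mulVec (ypart z)) ⬝ᵥ (xpart z)
      = (xpart z) ⬝ᵥ (((bigA A)ᵀ).mulVec (ypart z)) := dotProduct_comm _ _
  rw [h2]
  ring

lemma dotH_symm {d : Type*} [Fintype d] {H : Matrix d d ℝ} (hH : Hᵀ = H) (x y : d → ℝ) :
    x ⬝ᵥ (H.mulVec y) = y ⬝ᵥ (H.mulVec x) := by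
  rw [dotProduct_comm, dot_mulVec_transpose, hH]

end BlockComp

section SpecNormBound

variable {d : Type*} [Fintype d] [DecidableEq d]

lemma norm_withLp_symm (a : d → ℝ) :
    ‖(WithLp.equiv 2 (d → ℝ)).symm a‖ = Real.sqrt (a ⬝ᵥ a) := by
  rw [EuclideanSpace.norm_eq]
  congr 1
  rw [dotProduct]
  apply Finset.sum_congr rfl
  intro i _
  rw [show ((WithLp.equiv 2 (d → ℝ)).symm a).ofLp i = a i from rfl, Real.norm_eq_abs, sq_abs, pow_two]

lemma specNorm_nonneg (N : Matrix d d ℝ) : 0 ≤ specNorm N := norm_nonneg _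

lemma specnorm_mulVec_bound (N : Matrix d d ℝ) (a : d → ℝ) :
    Real.sqrt ((N.mulVec a) ⬝ᵥ (N.mulVec a)) ≤ specNorm N * Real.sqrt (a ⬝ᵥ a) := by
  have h1 : ‖(LinearMap.toContinuousLinearMap (Matrix.toEuclideanLin N))
      ((WithLp.equiv 2 (d → ℝ)).symm a)‖
      ≤ specNorm N * ‖(WithLp.equiv 2 (d → ℝ)).symm a‖ :=
    ContinuousLinearMap.le_opNorm _ _
  have h2 : (LinearMap.toContinuousLinearMap (Matrix.toEuclideanLin N))
      ((WithLp.equiv 2 (d → ℝ)).symm a) = (WithLp.equiv 2 (d → ℝ)).symm (N.mulVec a) := by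
    rw [LinearMap.coe_toContinuousLinearMap']
    simp [Matrix.toEuclideanLin_apply]
  rw [h2, norm_withLp_symm, norm_withLp_symm] at h1
  exact h1

lemma dot_cauchy_schwarz (a b : d → ℝ) :
    a ⬝ᵥ b ≤ Real.sqrt (a ⬝ᵥ a) * Real.sqrt (b ⬝ᵥ b) := by
  have h := Finset.sum_mul_sq_le_sq_mul_sq Finset.univ a b
  have e1 : (∑ i, a i ^ 2) = a ⬝ᵥ a := by
    rw [dotProduct]; apply Finset.sum_congr rfl; intro i _; rw [pow_two]
  have e2 : (∑ i, b i ^ 2) = b ⬝ᵥ b := by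
    rw [dotProduct]; apply Finset.sum_congr rfl; intro i _; rw [pow_two]
  have e3 : (∑ i, a i * b i) = a ⬝ᵥ b := rfl
  rw [e1, e2, e3] at h
  calc a ⬝ᵥ b ≤ |a ⬝ᵥ b| := le_abs_self _
    _ = Real.sqrt ((a ⬝ᵥ b)^2) := (Real.sqrt_sq_eq_abs _).symm
    _ ≤ Real.sqrt ((a ⬝ᵥ a) * (b ⬝ᵥ b)) := Real.sqrt_le_sqrt h
    _ = Real.sqrt (a ⬝ᵥ a) * Real.sqrt (b ⬝ᵥ b) := Real.sqrt_mul (dot_self_nonneg a) _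

section PosDefFacts

lemma psdSqrt_mul_self {d : Type*} [Fintype d] [DecidableEq d] {A : Matrix d d ℝ}
    (hA : A.PosSemidef) : psdSqrt hA * psdSqrt hA = A := by
  have hs := hA.1.spectral_theorem
  rw [Unitary.conjStarAlgAut_apply] at hs
  have hUU := Unitary.coe_star_mul_self hA.1.eigenvectorUnitary
  unfold psdSqrt
  conv_rhs => rw [hs]
  have e : diagonal (((↑) ∘ Real.sqrt ∘ hA.1.eigenvalues : d → ℝ)) *
      diagonal ((↑) ∘ Real.sqrt ∘ hA.1.eigenvalues) = diagonal (RCLike.ofReal ∘ hA.1.eigenvalues) := by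
    rw [diagonal_mul_diagonal]; congr 1; funext i
    simp [Real.mul_self_sqrt (hA.eigenvalues_nonneg i)]
  rw [← e]
  simp only [mul_assoc]
  rw [← mul_assoc (star _ : Matrix d d ℝ) (hA.1.eigenvectorUnitary : Matrix d d ℝ), hUU, one_mul]

lemma psdSqrt_transpose {d : Type*} [Fintype d] [DecidableEq d] {A : Matrix d d ℝ}
    (hA : A.PosSemidef) : (psdSqrt hA)ᵀ = psdSqrt hA := by
  rw [← Matrix.conjTranspose_eq_transpose_of_trivial]
  unfold psdSqrt
  rw [Matrix.conjTranspose_mul, Matrix.conjTranspose_mul, Matrix.diagonal_conjTranspose]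
  simp only [← Matrix.star_eq_conjTranspose, Unitary.coe_star, star_star, star_trivial, mul_assoc]


variable {H M2 : Matrix d d ℝ}

lemma QP_facts (hH : H.PosDef) :
    (psdSqrt hH.inv.posSemidef)⁻¹ * psdSqrt hH.inv.posSemidef = 1 ∧
    psdSqrt hH.inv.posSemidef * (psdSqrt hH.inv.posSemidef)⁻¹ = 1 ∧
    ((psdSqrt hH.inv.posSemidef)⁻¹)ᵀ = (psdSqrt hH.inv.posSemidef)⁻¹ ∧
    (psdSqrt hH.inv.posSemidef)⁻¹ * (psdSqrt hH.inv.posSemidef)⁻¹ = H := by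
  set Q := psdSqrt hH.inv.posSemidef with hQdef
  have hQQ : Q * Q = H⁻¹ := psdSqrt_mul_self hH.inv.posSemidef
  have hHdet : IsUnit H.det := isUnit_iff_ne_zero.mpr (ne_of_gt hH.det_pos)
  have hHinvdet : IsUnit (H⁻¹).det := isUnit_iff_ne_zero.mpr (ne_of_gt hH.inv.det_pos)
  have hQdet : IsUnit Q.det := by
    have h : Q.det * Q.det = (H⁻¹).det := by rw [← Matrix.det_mul, hQQ]
    rcases mul_ne_zero_iff.mp (h ▸ hHinvdet.ne_zero) with ⟨h1, -⟩
    exact isUnit_iff_ne_zero.mpr h1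
  have hPQ : Q⁻¹ * Q = 1 := Matrix.nonsing_inv_mul Q hQdet
  have hQP : Q * Q⁻¹ = 1 := Matrix.mul_nonsing_inv Q hQdet
  have hQsym : Qᵀ = Q := by
    exact psdSqrt_transpose hH.inv.posSemidef
  have hPsym : (Q⁻¹)ᵀ = Q⁻¹ := by
    rw [Matrix.transpose_nonsing_inv, hQsym]
  have hPP : Q⁻¹ * Q⁻¹ = H := by
    rw [← Matrix.mul_inv_rev, hQQ, Matrix.nonsing_inv_nonsing_inv H hHdet]
  exact ⟨hPQ, hQP, hPsym, hPP⟩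

lemma dotH_as_P (hH : H.PosDef) (z : d → ℝ) :
    ((psdSqrt hH.inv.posSemidef)⁻¹.mulVec z) ⬝ᵥ ((psdSqrt hH.inv.posSemidef)⁻¹.mulVec z)
      = z ⬝ᵥ H.mulVec z := by
  obtain ⟨hPQ, hQP, hPsym, hPP⟩ := QP_facts hH
  set P := (psdSqrt hH.inv.posSemidef)⁻¹
  rw [dot_mulVec_transpose P z (P.mulVec z), hPsym, Matrix.mulVec_mulVec, hPP]

lemma dotH_nonneg (hH : H.PosDef) (z : d → ℝ) : 0 ≤ z ⬝ᵥ H.mulVec z := by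
  rw [← dotH_as_P hH z]
  exact dot_self_nonneg _

lemma M2_pair_bound (hH : H.PosDef) {ρ : ℝ}
    (hρ : specNorm (psdSqrt hH.inv.posSemidef * M2 * psdSqrt hH.inv.posSemidef) ≤ ρ)
    (z e : d → ℝ) :
    (M2.mulVec z) ⬝ᵥ e
      ≤ ρ * (Real.sqrt (z ⬝ᵥ H.mulVec z) * Real.sqrt (e ⬝ᵥ H.mulVec e)) := by
  obtain ⟨hPQ, hQP, hPsym, hPP⟩ := QP_facts hH
  set Q := psdSqrt hH.inv.posSemidef with hQdef
  set P := Q⁻¹ with hPdef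
  set N := Q * M2 * Q with hNdef
  have hρ0 : 0 ≤ ρ := le_trans (specNorm_nonneg N) hρ
  have hM2eq : P * N * P = M2 := by
    have h1 : P * N * P = P * Q * (M2 * (Q * P)) := by simp only [hNdef, mul_assoc]
    rw [h1, hPQ, hQP, one_mul, mul_one]
  have hdot : (M2.mulVec z) ⬝ᵥ e = (N.mulVec (P.mulVec z)) ⬝ᵥ (P.mulVec e) := by
    conv_lhs => rw [← hM2eq]
    rw [← Matrix.mulVec_mulVec, ← Matrix.mulVec_mulVec,
      dot_mulVec_transpose P (N.mulVec (P.mulVec z)) e, hPsym]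
  have hz : (P.mulVec z) ⬝ᵥ (P.mulVec z) = z ⬝ᵥ H.mulVec z := dotH_as_P hH z
  have he : (P.mulVec e) ⬝ᵥ (P.mulVec e) = e ⬝ᵥ H.mulVec e := dotH_as_P hH e
  have hcs := dot_cauchy_schwarz (N.mulVec (P.mulVec z)) (P.mulVec e)
  have hns := specnorm_mulVec_bound N (P.mulVec z)
  rw [hz] at hns
  rw [he] at hcs
  have h2 : Real.sqrt ((N.mulVec (P.mulVec z)) ⬝ᵥ (N.mulVec (P.mulVec z)))
        * Real.sqrt (e ⬝ᵥ H.mulVec e)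
      ≤ (ρ * Real.sqrt (z ⬝ᵥ H.mulVec z)) * Real.sqrt (e ⬝ᵥ H.mulVec e) := by
    apply mul_le_mul_of_nonneg_right _ (Real.sqrt_nonneg _)
    exact le_trans hns (mul_le_mul_of_nonneg_right hρ (Real.sqrt_nonneg _))
  rw [hdot]
  calc (N.mulVec (P.mulVec z)) ⬝ᵥ (P.mulVec e)
      ≤ Real.sqrt ((N.mulVec (P.mulVec z)) ⬝ᵥ (N.mulVec (P.mulVec z)))
        * Real.sqrt (e ⬝ᵥ H.mulVec e) := hcs
    _ ≤ (ρ * Real.sqrt (z ⬝ᵥ H.mulVec z)) * Real.sqrt (e ⬝ᵥ H.mulVec e) := h2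
    _ = ρ * (Real.sqrt (z ⬝ᵥ H.mulVec z) * Real.sqrt (e ⬝ᵥ H.mulVec e)) := by ring

lemma M2_pair_AM (hH : H.PosDef) {ρ : ℝ}
    (hρ : specNorm (psdSqrt hH.inv.posSemidef * M2 * psdSqrt hH.inv.posSemidef) ≤ ρ)
    (z e : d → ℝ) :
    (M2.mulVec z) ⬝ᵥ e ≤ (ρ/2) * (z ⬝ᵥ H.mulVec z + e ⬝ᵥ H.mulVec e) := by
  have h1 := M2_pair_bound hH hρ z e
  have hρ0 : 0 ≤ ρ := le_trans (specNorm_nonneg _) hρ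
  have hz := dotH_nonneg hH z
  have he := dotH_nonneg hH e
  have h2 : Real.sqrt (z ⬝ᵥ H.mulVec z) * Real.sqrt (e ⬝ᵥ H.mulVec e)
      ≤ (z ⬝ᵥ H.mulVec z + e ⬝ᵥ H.mulVec e) / 2 := by
    nlinarith [Real.sq_sqrt hz, Real.sq_sqrt he,
      sq_nonneg (Real.sqrt (z ⬝ᵥ H.mulVec z) - Real.sqrt (e ⬝ᵥ H.mulVec e)),
      Real.sqrt_nonneg (z ⬝ᵥ H.mulVec z), Real.sqrt_nonneg (e ⬝ᵥ H.mulVec e)]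
  calc (M2.mulVec z) ⬝ᵥ e
      ≤ ρ * (Real.sqrt (z ⬝ᵥ H.mulVec z) * Real.sqrt (e ⬝ᵥ H.mulVec e)) := h1
    _ ≤ ρ * ((z ⬝ᵥ H.mulVec z + e ⬝ᵥ H.mulVec e) / 2) := mul_le_mul_of_nonneg_left h2 hρ0
    _ = (ρ/2) * (z ⬝ᵥ H.mulVec z + e ⬝ᵥ H.mulVec e) := by ring

lemma dot_le_specQ_sq (hH : H.PosDef) (x : d → ℝ) :
    x ⬝ᵥ x ≤ (specNorm (psdSqrt hH.inv.posSemidef))^2 * (x ⬝ᵥ H.mulVec x) := by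
  obtain ⟨hPQ, hQP, hPsym, hPP⟩ := QP_facts hH
  set Q := psdSqrt hH.inv.posSemidef with hQdef
  set P := Q⁻¹ with hPdef
  have hx : Q.mulVec (P.mulVec x) = x := by
    rw [Matrix.mulVec_mulVec, hQP, Matrix.one_mulVec]
  have h1 : Real.sqrt (x ⬝ᵥ x) ≤ specNorm Q * Real.sqrt (x ⬝ᵥ H.mulVec x) := by
    conv_lhs => rw [← hx]
    rw [← dotH_as_P hH x]
    exact specnorm_mulVec_bound Q (P.mulVec x)
  have h2 := mul_self_le_mul_self (Real.sqrt_nonneg (x ⬝ᵥ x)) h1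
  rw [Real.mul_self_sqrt (dot_self_nonneg x)] at h2
  calc x ⬝ᵥ x ≤ (specNorm Q * Real.sqrt (x ⬝ᵥ H.mulVec x))
        * (specNorm Q * Real.sqrt (x ⬝ᵥ H.mulVec x)) := h2
    _ = (specNorm Q)^2 * (Real.sqrt (x ⬝ᵥ H.mulVec x) * Real.sqrt (x ⬝ᵥ H.mulVec x)) := by ring
    _ = (specNorm Q)^2 * (x ⬝ᵥ H.mulVec x) := by
        rw [Real.mul_self_sqrt (dotH_nonneg hH x)]

end PosDefFacts

end SpecNormBound

section VIFramework

/-- Real-valued objective `Ψ(v) = ∑ g_i(x_i) + ⟨y, b⟩`. -/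
def PsiR (f : ∀ i : Fin s, (Fin (n i) → ℝ) → EReal) (b : Fin m → ℝ)
    (v : FIdx n m → ℝ) : ℝ :=
  (∑ i, (f i (blk (xpart v) i)).toReal) + (ypart v) ⬝ᵥ b

/-- The per-block variational inequality characterization of `w = 𝒯(ζ)`. -/
def VIat (f : ∀ i : Fin s, (Fin (n i) → ℝ) → EReal) (b : Fin m → ℝ)
    (α : Fin s → ℝ) (β : ℝ) (ζ z : FIdx n m → ℝ) : Prop :=
  (∀ i, f i (blk (xpart z) i) ≠ ⊤ ∧ ∀ u, f i u ≠ ⊤ →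
    (f i (blk (xpart z) i)).toReal
      + (β / α i) * ((blk (xpart ζ) i - blk (xpart z) i) ⬝ᵥ (u - blk (xpart z) i))
      ≤ (f i u).toReal)
  ∧ ypart ζ - ypart z = β • b

lemma isT_iff_VIat {f : ∀ i : Fin s, (Fin (n i) → ℝ) → EReal} {b : Fin m → ℝ}
    {α : Fin s → ℝ} {β : ℝ} (hf : ∀ i, ProperConvexLsc (f i))
    (hα : ∀ i, 0 < α i) (hβ : 0 < β) (ζ z : FIdx n m → ℝ) :
    isT f b α β ζ z ↔ VIat f b α β ζ z := by
  constructor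
  · rintro ⟨hxp, hyp⟩
    constructor
    · intro i
      have hc : 0 < α i / β := div_pos (hα i) hβ
      have h := block_subgrad (hf i) hc (hxp i)
      refine ⟨h.1, fun u hu => ?_⟩
      have h2 := h.2 u hu
      rw [one_div_div] at h2
      exact h2
    · exact (isProx_linear_iff hβ _ _).mp hyp
  · rintro ⟨hxp, hyp⟩
    constructor
    · intro i
      have hc : 0 < α i / β := div_pos (hα i) hβ
      apply block_subgrad_isProx (hf i) hc (hxp i).1
      intro u hu
      have h2 := (hxp i).2 u hu
      rw [one_div_div]
      exact h2
    · exact (isProx_linear_iff hβ _ _).mpr hyp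

lemma Rdot_formula (α : Fin s → ℝ) (β : ℝ) (w t : FIdx n m → ℝ) :
    ((Rmat (n := n) α β).mulVec w) ⬝ᵥ t
      = (∑ i, (β / α i) * ((blk (xpart w) i) ⬝ᵥ (blk (xpart t) i)))
        + (1/β) * ((ypart w) ⬝ᵥ (ypart t)) := by
  rw [Rmat_mulVec, dot_sum_split]
  congr 1
  · have hx : xpart (Sum.elim (fun p : XIdx n => (β / α p.1) * w (Sum.inl p))
        (fun r : Fin m => (1/β) * w (Sum.inr r)))
        = (fun p : XIdx n => (β / α p.1) * (xpart w) p) := rfl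
    rw [hx, dotX_blocks]
    apply Finset.sum_congr rfl
    intro i _
    have hb : blk (fun p : XIdx n => (β / α p.1) * (xpart w) p) i
        = (β / α i) • blk (xpart w) i := rfl
    rw [hb, smul_dotProduct, smul_eq_mul]
  · have hy : ypart (Sum.elim (fun p : XIdx n => (β / α p.1) * w (Sum.inl p))
        (fun r : Fin m => (1/β) * w (Sum.inr r)))
        = (1/β) • (ypart w) := rfl
    rw [hy, smul_dotProduct, smul_eq_mul]

lemma VI_sum {f : ∀ i : Fin s, (Fin (n i) → ℝ) → EReal} {b : Fin m → ℝ}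
    {α : Fin s → ℝ} {β : ℝ} (hβ : 0 < β)
    {ζ z : FIdx n m → ℝ} (hVI : VIat f b α β ζ z) (u : FIdx n m → ℝ)
    (hu : ∀ i, f i (blk (xpart u) i) ≠ ⊤) :
    PsiR f b z + ((Rmat α β).mulVec (ζ - z)) ⬝ᵥ (u - z) ≤ PsiR f b u := by
  obtain ⟨hx, hy⟩ := hVI
  rw [Rdot_formula]
  have hxle : ∀ i ∈ Finset.univ, (β / α i) * ((blk (xpart (ζ - z)) i) ⬝ᵥ (blk (xpart (u - z)) i))
      ≤ (f i (blk (xpart u) i)).toReal - (f i (blk (xpart z) i)).toReal := by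
    intro i _
    have h2 := (hx i).2 (blk (xpart u) i) (hu i)
    have e1 : blk (xpart (ζ - z)) i = blk (xpart ζ) i - blk (xpart z) i := rfl
    have e2 : blk (xpart (u - z)) i = blk (xpart u) i - blk (xpart z) i := rfl
    rw [e1, e2]
    linarith
  have hyeq : (1/β) * ((ypart (ζ - z)) ⬝ᵥ (ypart (u - z)))
      = (ypart u) ⬝ᵥ b - (ypart z) ⬝ᵥ b := by
    have h1 : ypart (ζ - z) = ypart ζ - ypart z := rfl
    have h2 : ypart (u - z) = ypart u - ypart z := rfl
    rw [h1, h2, hy, smul_dotProduct, smul_eq_mul]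
    have h3 : b ⬝ᵥ (ypart u - ypart z) = (ypart u) ⬝ᵥ b - (ypart z) ⬝ᵥ b := by
      rw [dotProduct_comm, sub_dotProduct]
    rw [h3]
    have hβ' : β ≠ 0 := ne_of_gt hβ
    field_simp
  have hsum := Finset.sum_le_sum hxle
  rw [Finset.sum_sub_distrib] at hsum
  rw [PsiR, PsiR, hyeq]
  linarith

/-- Raw inequality: adding the VIs at an iterate and at a point `z` with input `Ez`. -/
lemma raw_step {f : ∀ i : Fin s, (Fin (n i) → ℝ) → EReal}
    {A : ∀ i : Fin s, Matrix (Fin m) (Fin (n i)) ℝ} {b : Fin m → ℝ}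
    {α : Fin s → ℝ} {β : ℝ} (hα : ∀ i, 0 < α i) (hβ : 0 < β)
    {M0 M1 M2 : Matrix (FIdx n m) (FIdx n m) ℝ} (hM012 : M0 = M1 + M2)
    {u1 u2 w z : FIdx n m → ℝ}
    (hVIw : VIat f b α β ((Emat A α β - Rinv α β * M0).mulVec w + (Rinv α β * M1).mulVec u1
        + (Rinv α β * M2).mulVec u2) w)
    (hzdom : ∀ i, f i (blk (xpart z) i) ≠ ⊤)
    (hzineq : PsiR f b z + ((SAmat A).mulVec z) ⬝ᵥ (w - z) ≤ PsiR f b w) :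
    0 ≤ (M1.mulVec (u1 - w) + M2.mulVec (u2 - w)) ⬝ᵥ (w - z) := by
  -- the input vector of the iterate VI
  set ξ : FIdx n m → ℝ := (Emat A α β - Rinv α β * M0).mulVec w + (Rinv α β * M1).mulVec u1
      + (Rinv α β * M2).mulVec u2 with hξ
  have hwdom : ∀ i, f i (blk (xpart w) i) ≠ ⊤ := fun i => (hVIw.1 i).1
  have h1 := VI_sum hβ hVIw z hzdom
  have h2 := hzineq
  -- key algebraic identity: R(ξ - w) = SA w + M1 (u1 - w) + M2 (u2 - w)
  have hkey : (Rmat (n := n) α β).mulVec (ξ - w)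
      = (SAmat A).mulVec w + M1.mulVec (u1 - w) + M2.mulVec (u2 - w) := by
    have hsplit : ξ - w = ((Emat A α β).mulVec w - w)
        + ((Rinv α β).mulVec (M1.mulVec u1 + M2.mulVec u2 - M0.mulVec w)) := by
      rw [hξ]
      rw [Matrix.sub_mulVec, ← Matrix.mulVec_mulVec, ← Matrix.mulVec_mulVec,
        ← Matrix.mulVec_mulVec, Matrix.mulVec_sub, Matrix.mulVec_add]
      abel
    rw [hsplit, Matrix.mulVec_add, RE_eq_SA hα hβ, RRinv_mulVec hα hβ]
    have hM : M1.mulVec u1 + M2.mulVec u2 - M0.mulVec w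
        = M1.mulVec (u1 - w) + M2.mulVec (u2 - w) := by
      rw [hM012, Matrix.add_mulVec, Matrix.mulVec_sub, Matrix.mulVec_sub]
      abel
    rw [hM, add_assoc]
  rw [hkey] at h1
  -- add the two inequalities
  have h3 : ((SAmat A).mulVec w + M1.mulVec (u1 - w) + M2.mulVec (u2 - w)) ⬝ᵥ (z - w)
      + ((SAmat A).mulVec z) ⬝ᵥ (w - z) ≤ 0 := by linarith
  have h4 : ((SAmat A).mulVec w) ⬝ᵥ (z - w) + ((SAmat A).mulVec z) ⬝ᵥ (w - z)
      = -(((SAmat A).mulVec (w - z)) ⬝ᵥ (w - z)) := by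
    rw [Matrix.mulVec_sub, sub_dotProduct]
    have e1 : z - w = -(w - z) := by abel
    rw [e1, dotProduct_neg]
    ring
  have h5 : ((SAmat A).mulVec (w - z)) ⬝ᵥ (w - z) = 0 := SA_skew A (w - z)
  have e1 : z - w = -(w - z) := by abel
  have hd2 : (M1.mulVec (u1 - w)) ⬝ᵥ (z - w) = -((M1.mulVec (u1 - w)) ⬝ᵥ (w - z)) := by
    rw [e1, dotProduct_neg]
  have hd3 : (M2.mulVec (u2 - w)) ⬝ᵥ (z - w) = -((M2.mulVec (u2 - w)) ⬝ᵥ (w - z)) := by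
    rw [e1, dotProduct_neg]
  rw [add_dotProduct, add_dotProduct] at h3
  rw [add_dotProduct]
  linarith [h3, h4, h5, hd2, hd3]

end VIFramework

section Lyapunov

variable {d : Type*} [Fintype d] [DecidableEq d]

/-- The Lyapunov function `Ĝ_k`. -/
def GhatF (Hm M2 : Matrix d d ℝ) (ρ : ℝ) (v : ℕ → d → ℝ) (z : d → ℝ) (k : ℕ) : ℝ :=
  (1/2) * ((v (k+1) - z) ⬝ᵥ Hm.mulVec (v (k+1) - z))
    - (M2.mulVec (v (k+1) - v k)) ⬝ᵥ (v (k+1) - z)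
    + (ρ/2) * ((v (k+1) - v k) ⬝ᵥ Hm.mulVec (v (k+1) - v k))

lemma Hdot_comm {Hm : Matrix d d ℝ} (hsym : Hmᵀ = Hm) (x y : d → ℝ) :
    (Hm.mulVec x) ⬝ᵥ y = x ⬝ᵥ (Hm.mulVec y) := by
  rw [dot_mulVec_transpose, hsym]

lemma nH_add {Hm : Matrix d d ℝ} (hsym : Hmᵀ = Hm) (x y : d → ℝ) :
    (x + y) ⬝ᵥ Hm.mulVec (x + y)
      = x ⬝ᵥ Hm.mulVec x + 2 * (y ⬝ᵥ Hm.mulVec x) + y ⬝ᵥ Hm.mulVec y := by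
  simp only [Matrix.mulVec_add, dotProduct_add, add_dotProduct]
  rw [dotH_symm hsym x y]
  ring

lemma lyapunov_descent {Hm M1 M2 : Matrix d d ℝ} (hH : Hm.PosDef)
    (hM1 : M1 = Hm - M2 - M2) {ρ : ℝ}
    (hρ : specNorm (psdSqrt hH.inv.posSemidef * M2 * psdSqrt hH.inv.posSemidef) ≤ ρ)
    (v : ℕ → d → ℝ) (z : d → ℝ)
    (hraw : ∀ k, 0 ≤ (M1.mulVec (v (k+1) - v (k+2)) + M2.mulVec (v k - v (k+2)))
        ⬝ᵥ (v (k+2) - z)) :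
    (∀ k, GhatF Hm M2 ρ v z (k+1) ≤ GhatF Hm M2 ρ v z k
        - (1/2 - ρ) * ((v (k+2) - v (k+1)) ⬝ᵥ Hm.mulVec (v (k+2) - v (k+1))))
    ∧ (∀ k, ((1-ρ)/2) * ((v (k+1) - z) ⬝ᵥ Hm.mulVec (v (k+1) - z)) ≤ GhatF Hm M2 ρ v z k) := by
  have hsym : Hmᵀ = Hm := by
    have h := hH.1
    rwa [Matrix.IsHermitian, Matrix.conjTranspose_eq_transpose_of_trivial] at h
  constructor
  · intro k
    set dd : d → ℝ := v (k+2) - v (k+1) with hdd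
    set dd' : d → ℝ := v (k+1) - v k with hdd'
    set e1 : d → ℝ := v (k+1) - z with he1
    set e2 : d → ℝ := v (k+2) - z with he2
    have he2e1 : e2 = e1 + dd := by rw [he2, he1, hdd]; abel
    have h1 : v (k+1) - v (k+2) = -dd := by rw [hdd]; abel
    have h2 : v k - v (k+2) = -(dd + dd') := by rw [hdd, hdd']; abel
    have hsum : (M1.mulVec (v (k+1) - v (k+2)) + M2.mulVec (v k - v (k+2))) ⬝ᵥ (v (k+2) - z)
        = -((Hm.mulVec dd) ⬝ᵥ e2) + (M2.mulVec dd) ⬝ᵥ e2 - (M2.mulVec dd') ⬝ᵥ e2 := by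
      rw [h1, h2, hM1, ← he2]
      simp only [Matrix.mulVec_neg, Matrix.sub_mulVec, Matrix.mulVec_add, add_dotProduct,
        sub_dotProduct, neg_dotProduct]
      ring
    have hkey : (Hm.mulVec dd) ⬝ᵥ e2 ≤ (M2.mulVec dd) ⬝ᵥ e2 - (M2.mulVec dd') ⬝ᵥ e2 := by
      have := hraw k
      rw [hsum] at this
      linarith
    have hexp : e2 ⬝ᵥ Hm.mulVec e2 = e1 ⬝ᵥ Hm.mulVec e1 + 2 * (dd ⬝ᵥ Hm.mulVec e1)
        + dd ⬝ᵥ Hm.mulVec dd := by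
      rw [he2e1]; exact nH_add hsym e1 dd
    have hHd : (Hm.mulVec dd) ⬝ᵥ e2 = dd ⬝ᵥ Hm.mulVec e1 + dd ⬝ᵥ Hm.mulVec dd := by
      rw [Hdot_comm hsym, he2e1, Matrix.mulVec_add, dotProduct_add]
    have hM2e2 : (M2.mulVec dd') ⬝ᵥ e2 = (M2.mulVec dd') ⬝ᵥ e1 + (M2.mulVec dd') ⬝ᵥ dd := by
      rw [he2e1, dotProduct_add]
    have hAM : (M2.mulVec dd') ⬝ᵥ (-dd)
        ≤ (ρ/2) * (dd' ⬝ᵥ Hm.mulVec dd' + dd ⬝ᵥ Hm.mulVec dd) := by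
      have h := M2_pair_AM hH hρ dd' (-dd)
      have hneg : (-dd) ⬝ᵥ Hm.mulVec (-dd) = dd ⬝ᵥ Hm.mulVec dd := by
        rw [Matrix.mulVec_neg, dotProduct_neg, neg_dotProduct, neg_neg]
      rwa [hneg] at h
    have hnegdot : (M2.mulVec dd') ⬝ᵥ (-dd) = -((M2.mulVec dd') ⬝ᵥ dd) := dotProduct_neg _ _
    rw [hnegdot] at hAM
    -- unfold Ghat at k and k+1
    show (1/2) * (e2 ⬝ᵥ Hm.mulVec e2) - (M2.mulVec dd) ⬝ᵥ e2 + (ρ/2) * (dd ⬝ᵥ Hm.mulVec dd)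
        ≤ (1/2) * (e1 ⬝ᵥ Hm.mulVec e1) - (M2.mulVec dd') ⬝ᵥ e1
          + (ρ/2) * (dd' ⬝ᵥ Hm.mulVec dd') - (1/2 - ρ) * (dd ⬝ᵥ Hm.mulVec dd)
    linarith [hkey, hexp, hHd, hM2e2, hAM]
  · intro k
    set dd' : d → ℝ := v (k+1) - v k with hdd'
    set e1 : d → ℝ := v (k+1) - z with he1
    have hAM : (M2.mulVec dd') ⬝ᵥ e1
        ≤ (ρ/2) * (dd' ⬝ᵥ Hm.mulVec dd' + e1 ⬝ᵥ Hm.mulVec e1) := M2_pair_AM hH hρ dd' e1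
    show ((1-ρ)/2) * (e1 ⬝ᵥ Hm.mulVec e1)
        ≤ (1/2) * (e1 ⬝ᵥ Hm.mulVec e1) - (M2.mulVec dd') ⬝ᵥ e1
          + (ρ/2) * (dd' ⬝ᵥ Hm.mulVec dd')
    linarith [hAM]

end Lyapunov

section SeqHelpers

lemma descent_summable {G D : ℕ → ℝ} {c : ℝ} (hc : 0 < c)
    (hdesc : ∀ k, G (k+1) ≤ G k - c * D (k+1)) (hD : ∀ k, 0 ≤ D k) (hG : ∀ k, 0 ≤ G k) :
    Tendsto D atTop (𝓝 0) ∧ ∀ k, G k ≤ G 0 := by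
  have hpartial : ∀ K, c * (∑ j ∈ Finset.range K, D (j+1)) + G K ≤ G 0 := by
    intro K
    induction K with
    | zero => simp
    | succ K ih =>
      rw [Finset.sum_range_succ]
      have := hdesc K
      nlinarith [this, ih]
  have hbound : ∀ K, (∑ j ∈ Finset.range K, D (j+1)) ≤ G 0 / c := by
    intro K
    rw [le_div_iff₀ hc]
    have := hpartial K
    have := hG K
    nlinarith
  have hsummable : Summable (fun j => D (j+1)) :=
    summable_of_sum_range_le (fun j => hD (j+1)) hbound
  have htend : Tendsto (fun j => D (j+1)) atTop (𝓝 0) := hsummable.tendsto_atTop_zero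
  constructor
  · exact (tendsto_add_atTop_iff_nat 1).mp htend
  · have hmono : ∀ k, G (k+1) ≤ G k := by
      intro k
      have h1 := hdesc k
      have h2 := hD (k+1)
      nlinarith
    have hant : Antitone G := antitone_nat_of_succ_le hmono
    exact fun k => hant (Nat.zero_le k)

lemma tendsto_zero_of_antitone_cluster {G : ℕ → ℝ} (hmono : ∀ k, G (k+1) ≤ G k)
    (hnon : ∀ k, 0 ≤ G k) {φ : ℕ → ℕ} (hφ : StrictMono φ)
    (hsub : Tendsto (fun j => G (φ j)) atTop (𝓝 0)) : Tendsto G atTop (𝓝 0) := by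
  have hant : Antitone G := antitone_nat_of_succ_le hmono
  rw [Metric.tendsto_atTop] at hsub ⊢
  intro ε hε
  obtain ⟨J, hJ⟩ := hsub ε hε
  refine ⟨φ J, fun k hk => ?_⟩
  have h1 := hJ J (le_refl J)
  rw [Real.dist_eq, sub_zero] at h1 ⊢
  have h2 : G k ≤ G (φ J) := hant hk
  rw [abs_of_nonneg (hnon _)] at h1 ⊢
  linarith

lemma tendsto_dot {ι : Type*} [Fintype ι] {xk yk : ℕ → ι → ℝ} {x y : ι → ℝ}
    (hx : Tendsto xk atTop (𝓝 x)) (hy : Tendsto yk atTop (𝓝 y)) :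
    Tendsto (fun k => (xk k) ⬝ᵥ (yk k)) atTop (𝓝 (x ⬝ᵥ y)) := by
  have hxi : ∀ i, Tendsto (fun k => xk k i) atTop (𝓝 (x i)) :=
    fun i => tendsto_pi_nhds.mp hx i
  have hyi : ∀ i, Tendsto (fun k => yk k i) atTop (𝓝 (y i)) :=
    fun i => tendsto_pi_nhds.mp hy i
  have : ∀ k, (xk k) ⬝ᵥ (yk k) = ∑ i, xk k i * yk k i := fun k => rfl
  simp only [this, dotProduct]
  exact tendsto_finset_sum _ (fun i _ => (hxi i).mul (hyi i))

lemma tendsto_mulVec {ι κ : Type*} [Fintype ι] [Fintype κ] (M : Matrix κ ι ℝ)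
    {xk : ℕ → ι → ℝ} {x : ι → ℝ} (hx : Tendsto xk atTop (𝓝 x)) :
    Tendsto (fun k => M.mulVec (xk k)) atTop (𝓝 (M.mulVec x)) := by
  rw [tendsto_pi_nhds]
  intro r
  have : ∀ k, M.mulVec (xk k) r = (M r) ⬝ᵥ (xk k) := fun k => rfl
  simp only [this]
  exact tendsto_dot tendsto_const_nhds hx

lemma sq_tendsto_zero {u : ℕ → ℝ} (h : Tendsto (fun k => (u k)^2) atTop (𝓝 0)) :
    Tendsto u atTop (𝓝 0) := by
  have h1 : Tendsto (fun k => Real.sqrt ((u k)^2)) atTop (𝓝 (Real.sqrt 0)) :=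
    (Real.continuous_sqrt.tendsto 0).comp h
  rw [Real.sqrt_zero] at h1
  have h2 : (fun k => Real.sqrt ((u k)^2)) = fun k => |u k| := by
    funext k; exact Real.sqrt_sq_eq_abs _
  rw [h2] at h1
  have h3 : ∀ k, -|u k| ≤ u k := fun k => neg_abs_le _
  have h4 : ∀ k, u k ≤ |u k| := fun k => le_abs_self _
  have h5 : Tendsto (fun k => -|u k|) atTop (𝓝 0) := by
    have := h1.neg
    rwa [neg_zero] at this
  exact tendsto_of_tendsto_of_tendsto_of_le_of_le h5 h1 h3 h4

end SeqHelpers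

section Bridges

variable {f : ∀ i : Fin s, (Fin (n i) → ℝ) → EReal}

lemma objSum_ne_top_iff (hf : ∀ i, ProperConvexLsc (f i)) (x : XIdx n → ℝ) :
    objSum f x ≠ ⊤ ↔ ∀ i, f i (blk x i) ≠ ⊤ := by
  constructor
  · intro h i htop
    exact h (ERealAux.sum_eq_top Finset.univ _ (fun j _ => (hf j).2.1 _)
      (Finset.mem_univ i) htop)
  · intro h
    rw [objSum]
    have hc : ∀ i ∈ Finset.univ, f i (blk x i) = (((f i (blk x i)).toReal : ℝ) : EReal) :=
      fun i _ => (EReal.coe_toReal (h i) ((hf i).2.1 _)).symm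
    rw [Finset.sum_congr rfl hc, ERealAux.sum_coe]
    exact EReal.coe_ne_top _

lemma objSum_eq_coe (hf : ∀ i, ProperConvexLsc (f i)) {x : XIdx n → ℝ}
    (hx : ∀ i, f i (blk x i) ≠ ⊤) :
    objSum f x = ((∑ i, (f i (blk x i)).toReal : ℝ) : EReal) := by
  rw [objSum]
  have hc : ∀ i ∈ Finset.univ, f i (blk x i) = (((f i (blk x i)).toReal : ℝ) : EReal) :=
    fun i _ => (EReal.coe_toReal (hx i) ((hf i).2.1 _)).symm
  rw [Finset.sum_congr rfl hc, ERealAux.sum_coe]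

lemma block_convex_real {ι : Type*} [Fintype ι] {g : (ι → ℝ) → EReal}
    (hg : ProperConvexLsc g) {x y : ι → ℝ} (hx : g x ≠ ⊤) (hy : g y ≠ ⊤)
    {t : ℝ} (ht0 : 0 < t) (ht1 : t < 1) :
    g (t • x + (1 - t) • y) ≠ ⊤ ∧
      (g (t • x + (1 - t) • y)).toReal ≤ t * (g x).toReal + (1 - t) * (g y).toReal := by
  obtain ⟨-, hbot, -, hconv⟩ := hg
  have hxr : g x = (((g x).toReal : ℝ) : EReal) := (EReal.coe_toReal hx (hbot x)).symm
  have hyr : g y = (((g y).toReal : ℝ) : EReal) := (EReal.coe_toReal hy (hbot y)).symm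
  have h := hconv x y t ht0 ht1
  rw [hxr, hyr, ERealAux.coe_mul_coe, ERealAux.coe_mul_coe, ← EReal.coe_add] at h
  have hne : g (t • x + (1 - t) • y) ≠ ⊤ := by
    intro htop
    rw [htop, top_le_iff] at h
    exact EReal.coe_ne_top _ h
  have hgr : g (t • x + (1 - t) • y)
      = (((g (t • x + (1 - t) • y)).toReal : ℝ) : EReal) :=
    (EReal.coe_toReal hne (hbot _)).symm
  rw [hgr, EReal.coe_le_coe_iff] at h
  exact ⟨hne, h⟩

/-- Gluing an x-part and a y-part into a full vector. -/
def glue (x : XIdx n → ℝ) (y : Fin m → ℝ) : FIdx n m → ℝ := Sum.elim x y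

/-- The joint fixed-point variational inequality at a point `z`. -/
def FixIneq (f : ∀ i : Fin s, (Fin (n i) → ℝ) → EReal)
    (A : ∀ i : Fin s, Matrix (Fin m) (Fin (n i)) ℝ) (b : Fin m → ℝ)
    (z : FIdx n m → ℝ) : Prop :=
  (∀ i, f i (blk (xpart z) i) ≠ ⊤) ∧
  ∀ u : FIdx n m → ℝ, (∀ i, f i (blk (xpart u) i) ≠ ⊤) →
    PsiR f b z + ((SAmat A).mulVec z) ⬝ᵥ (u - z) ≤ PsiR f b u

lemma FixIneq_of_VIat {f : ∀ i : Fin s, (Fin (n i) → ℝ) → EReal}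
    {A : ∀ i : Fin s, Matrix (Fin m) (Fin (n i)) ℝ} {b : Fin m → ℝ}
    {α : Fin s → ℝ} {β : ℝ} (hα : ∀ i, 0 < α i) (hβ : 0 < β) {z : FIdx n m → ℝ}
    (h : VIat f b α β ((Emat A α β).mulVec z) z) : FixIneq f A b z := by
  refine ⟨fun i => (h.1 i).1, fun u hu => ?_⟩
  have h1 := VI_sum hβ h u hu
  rwa [RE_eq_SA hα hβ] at h1

end Bridges

section Duality

variable {f : ∀ i : Fin s, (Fin (n i) → ℝ) → EReal}
  {A : ∀ i : Fin s, Matrix (Fin m) (Fin (n i)) ℝ} {b : Fin m → ℝ}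

lemma sumAx_eq_mulVec (x : XIdx n → ℝ) : sumAx A x = (bigA A).mulVec x :=
  (bigA_mulVec A x).symm

lemma sumAx_sub (x y : XIdx n → ℝ) : sumAx A (x - y) = sumAx A x - sumAx A y := by
  rw [sumAx_eq_mulVec, sumAx_eq_mulVec, sumAx_eq_mulVec, Matrix.mulVec_sub]

lemma sumAx_smul_add (a c : ℝ) (x y : XIdx n → ℝ) :
    sumAx A (a • x + c • y) = a • sumAx A x + c • sumAx A y := by
  rw [sumAx_eq_mulVec, sumAx_eq_mulVec, sumAx_eq_mulVec, Matrix.mulVec_add,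
    Matrix.mulVec_smul, Matrix.mulVec_smul]

theorem exists_dual (hf : ∀ i, ProperConvexLsc (f i)) (hb : RiCond f A b)
    {xstar : XIdx n → ℝ} (hsol : IsSolution f A b xstar) :
    (∀ i, f i (blk xstar i) ≠ ⊤) ∧
    ∃ ystar : Fin m → ℝ, ∀ x : XIdx n → ℝ, (∀ i, f i (blk x i) ≠ ⊤) →
      (∑ i, (f i (blk xstar i)).toReal) + ystar ⬝ᵥ (sumAx A x - b)
        ≤ ∑ i, (f i (blk x i)).toReal := by
  classical
  obtain ⟨xbar, hxbar_ri, hxbar_feas'⟩ := hb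
  have hxbar_feas : sumAx A xbar = b := hxbar_feas'
  clear hxbar_feas'
  set Dset : Set (XIdx n → ℝ) := {x | objSum f x ≠ ⊤} with hDset
  have hxbarD : xbar ∈ Dset := intrinsicInterior_subset hxbar_ri
  have hxbar_top : ∀ i, f i (blk xbar i) ≠ ⊤ := (objSum_ne_top_iff hf xbar).mp hxbarD
  obtain ⟨hfeas, hopt⟩ := hsol
  have hxstarD : xstar ∈ Dset := by
    intro htop
    have h1 := hopt xbar hxbar_feas
    rw [htop, top_le_iff] at h1
    exact hxbarD h1
  have hxstar_top : ∀ i, f i (blk xstar i) ≠ ⊤ := (objSum_ne_top_iff hf xstar).mp hxstarD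
  set Gx : (XIdx n → ℝ) → ℝ := fun x => ∑ i, (f i (blk x i)).toReal with hGx
  set p : ℝ := Gx xstar with hp
  have hGopt : ∀ x ∈ Dset, sumAx A x = b → p ≤ Gx x := by
    intro x hxD hxf
    have h1 := hopt x hxf
    rw [objSum_eq_coe hf hxstar_top, objSum_eq_coe hf ((objSum_ne_top_iff hf x).mp hxD),
      EReal.coe_le_coe_iff] at h1
    exact h1
  have hDG : ∀ x ∈ Dset, ∀ y ∈ Dset, ∀ t : ℝ, 0 < t → t < 1 →
      t • x + (1 - t) • y ∈ Dset ∧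
        Gx (t • x + (1 - t) • y) ≤ t * Gx x + (1 - t) * Gx y := by
    intro x hx y hy t ht0 ht1
    have hxt := (objSum_ne_top_iff hf x).mp hx
    have hyt := (objSum_ne_top_iff hf y).mp hy
    have hper : ∀ i, f i (blk (t • x + (1 - t) • y) i) ≠ ⊤ ∧
        (f i (blk (t • x + (1 - t) • y) i)).toReal
          ≤ t * (f i (blk x i)).toReal + (1 - t) * (f i (blk y i)).toReal := by
      intro i
      have hblk : blk (t • x + (1 - t) • y) i = t • blk x i + (1 - t) • blk y i := rfl
      rw [hblk]
      exact block_convex_real (hf i) (hxt i) (hyt i) ht0 ht1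
    constructor
    · exact (objSum_ne_top_iff hf _).mpr (fun i => (hper i).1)
    · calc Gx (t • x + (1 - t) • y)
          = ∑ i, (f i (blk (t • x + (1 - t) • y) i)).toReal := rfl
        _ ≤ ∑ i, (t * (f i (blk x i)).toReal + (1 - t) * (f i (blk y i)).toReal) :=
            Finset.sum_le_sum (fun i _ => (hper i).2)
        _ = t * Gx x + (1 - t) * Gx y := by
            rw [Finset.sum_add_distrib, ← Finset.mul_sum, ← Finset.mul_sum]
  -- affine-span machinery
  set W0 : Submodule ℝ (XIdx n → ℝ) := (affineSpan ℝ Dset).direction with hW0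
  set Alin : (XIdx n → ℝ) →ₗ[ℝ] (Fin m → ℝ) := (bigA A).mulVecLin with hAlin
  have hAlin_apply : ∀ x, Alin x = sumAx A x := fun x => by
    rw [hAlin, Matrix.mulVecLin_apply, ← sumAx_eq_mulVec]
  set f0 : W0 →ₗ[ℝ] (Fin m → ℝ) := Alin.comp W0.subtype with hf0
  set S : Submodule ℝ (Fin m → ℝ) := LinearMap.range f0 with hSdef
  have hdiff_mem : ∀ x ∈ Dset, x - xbar ∈ W0 := by
    intro x hx
    have h1 := AffineSubspace.vsub_mem_direction (subset_affineSpan ℝ Dset hx)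
      (subset_affineSpan ℝ Dset hxbarD)
    rwa [vsub_eq_sub] at h1
  have hSmem : ∀ x ∈ Dset, sumAx A x - b ∈ S := by
    intro x hx
    refine ⟨⟨x - xbar, hdiff_mem x hx⟩, ?_⟩
    show Alin (x - xbar) = sumAx A x - b
    rw [hAlin, Matrix.mulVecLin_apply, Matrix.mulVec_sub, ← sumAx_eq_mulVec,
      ← sumAx_eq_mulVec, hxbar_feas]
  obtain ⟨S', hcompl⟩ := Submodule.exists_isCompl S
  obtain ⟨g1, hg1⟩ := f0.rangeRestrict.exists_rightInverse_of_surjective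
      (LinearMap.range_rangeRestrict f0)
  have hg1' : ∀ w : S, f0 (g1 w) = (w : Fin m → ℝ) := by
    intro w
    have h1 := DFunLike.congr_fun hg1 w
    have h2 : (f0.rangeRestrict (g1 w) : Fin m → ℝ) = f0 (g1 w) := rfl
    rw [← h2]
    exact congrArg Subtype.val h1
  -- δ-ball around xbar inside Dset
  rw [mem_intrinsicInterior] at hxbar_ri
  obtain ⟨ybar, hybar_int, hybar_eq⟩ := hxbar_ri
  obtain ⟨δ, hδ0, hδball⟩ : ∃ δ > 0, Metric.ball ybar δ ⊆ ((↑) ⁻¹' Dset) := by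
    rw [mem_interior_iff_mem_nhds] at hybar_int
    exact Metric.mem_nhds_iff.mp hybar_int
  have hdir_in : ∀ dvec ∈ W0, ‖dvec‖ < δ → xbar + dvec ∈ Dset := by
    intro dvec hd hnorm
    have hmem : xbar + dvec ∈ affineSpan ℝ Dset := by
      have h1 := AffineSubspace.vadd_mem_of_mem_direction hd (subset_affineSpan ℝ Dset hxbarD)
      rwa [vadd_eq_add, add_comm] at h1
    have h2 : (⟨xbar + dvec, hmem⟩ : affineSpan ℝ Dset) ∈ Metric.ball ybar δ := by
      rw [Metric.mem_ball, Subtype.dist_eq, hybar_eq, dist_eq_norm]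
      simpa using hnorm
    exact hδball h2
  -- attainability of scaled directions of S
  have hsmall : ∀ w : Fin m → ℝ, w ∈ S → ∃ c : ℝ, 0 < c ∧
      ∃ x ∈ Dset, sumAx A x - b = c • w := by
    intro w hw
    set dvec : W0 := g1 ⟨w, hw⟩ with hdvec
    set c : ℝ := δ / (2 * (‖(dvec : XIdx n → ℝ)‖ + 1)) with hc
    have hc0 : 0 < c := div_pos hδ0 (by positivity)
    have hsA : sumAx A (dvec : XIdx n → ℝ) = w := by
      have h3 := hg1' ⟨w, hw⟩
      rw [← hAlin_apply]
      exact h3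
    refine ⟨c, hc0, xbar + c • (dvec : XIdx n → ℝ), ?_, ?_⟩
    · apply hdir_in _ (W0.smul_mem c (Submodule.coe_mem dvec))
      rw [norm_smul, Real.norm_eq_abs, abs_of_pos hc0]
      have h4 : c * (‖(dvec : XIdx n → ℝ)‖ + 1) = δ / 2 := by
        rw [hc]; field_simp
      have h4' : c * ‖(dvec : XIdx n → ℝ)‖ + c = δ / 2 := by rw [← h4]; ring
      linarith
    · rw [sumAx_eq_mulVec, Matrix.mulVec_add, Matrix.mulVec_smul, ← sumAx_eq_mulVec,
        ← sumAx_eq_mulVec, hxbar_feas, hsA]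
      abel
  -- the separation set
  set Mset : Set ((Fin m → ℝ) × ℝ) :=
    {q | ∃ x ∈ Dset, ∃ u' ∈ S', q.1 = sumAx A x - b + u' ∧ Gx x - p < q.2} with hMset
  have hconvM : Convex ℝ Mset := by
    rintro q1 ⟨x1, hx1, u1, hu1, hq11, hq12⟩ q2 ⟨x2, hx2, u2, hu2, hq21, hq22⟩ a c ha hc hac
    rcases eq_or_lt_of_le ha with ha0 | ha0
    · have hc1 : c = 1 := by linarith
      have : a • q1 + c • q2 = q2 := by rw [← ha0, hc1]; simp
      rw [this]
      exact ⟨x2, hx2, u2, hu2, hq21, hq22⟩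
    rcases eq_or_lt_of_le hc with hc0 | hc0
    · have ha1 : a = 1 := by linarith
      have : a • q1 + c • q2 = q1 := by rw [← hc0, ha1]; simp
      rw [this]
      exact ⟨x1, hx1, u1, hu1, hq11, hq12⟩
    have ha1 : a < 1 := by linarith
    obtain ⟨hxD, hGle⟩ := hDG x1 hx1 x2 hx2 a ha0 ha1
    have hceq : (1 : ℝ) - a = c := by linarith
    rw [hceq] at hxD hGle
    refine ⟨a • x1 + c • x2, hxD, a • u1 + c • u2,
      S'.add_mem (S'.smul_mem a hu1) (S'.smul_mem c hu2), ?_, ?_⟩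
    · show a • q1.1 + c • q2.1 = _
      have hbb : a • b + c • b = b := by
        rw [← add_smul, hac, one_smul]
      rw [hq11, hq21, sumAx_smul_add]
      have hmod : a • (sumAx A x1 - b + u1) + c • (sumAx A x2 - b + u2)
          = a • sumAx A x1 + c • sumAx A x2 - (a • b + c • b) + (a • u1 + c • u2) := by
        module
      rw [hmod, hbb]
    · show Gx (a • x1 + c • x2) - p < a • q1.2 + c • q2.2
      have h1 : a * q1.2 > a * (Gx x1 - p) := by
        exact mul_lt_mul_of_pos_left hq12 ha0
      have h2 : c * q2.2 > c * (Gx x2 - p) := mul_lt_mul_of_pos_left hq22 hc0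
      have h5 : a * p + c * p = p := by rw [← add_mul, hac, one_mul]
      have h3 : a * (Gx x1 - p) + c * (Gx x2 - p) = a * Gx x1 + c * Gx x2 - p := by
        linear_combination -h5
      show Gx (a • x1 + c • x2) - p < a * q1.2 + c * q2.2
      linarith [hGle, h1, h2, h3]
  have h0M : ((0, 0) : (Fin m → ℝ) × ℝ) ∉ Mset := by
    rintro ⟨x, hxD, u', hu', hq1, hq2⟩
    have hu'eq : u' = -(sumAx A x - b) := by
      have h1 : (0 : Fin m → ℝ) = sumAx A x - b + u' := hq1
      exact eq_neg_of_add_eq_zero_right h1.symm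
    have hu'S : u' ∈ S := by
      rw [hu'eq]
      exact S.neg_mem (hSmem x hxD)
    have hu'0 : u' = 0 := Submodule.disjoint_def.mp hcompl.symm.disjoint u' hu' hu'S
    have hfeas' : sumAx A x = b := by
      rw [hu'0] at hu'eq
      have h5 : sumAx A x - b = 0 := by
        rw [← neg_eq_zero, ← hu'eq]
      exact sub_eq_zero.mp h5
    have h3 := hGopt x hxD hfeas'
    have h4 : Gx x - p < (0:ℝ) := hq2
    linarith
  -- the affine span of Mset is everything
  set q0 : (Fin m → ℝ) × ℝ := (0, Gx xbar - p + 1) with hq0def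
  have hq0M : q0 ∈ Mset := by
    refine ⟨xbar, hxbarD, 0, S'.zero_mem, ?_, ?_⟩
    · show (0 : Fin m → ℝ) = sumAx A xbar - b + 0
      rw [hxbar_feas]; simp
    · show Gx xbar - p < Gx xbar - p + 1
      linarith
  set T := (affineSpan ℝ Mset).direction with hT
  have hvert : (((0 : Fin m → ℝ), (1:ℝ)) : (Fin m → ℝ) × ℝ) ∈ T := by
    have h1 : q0 + ((0 : Fin m → ℝ), (1:ℝ)) ∈ Mset := by
      refine ⟨xbar, hxbarD, 0, S'.zero_mem, ?_, ?_⟩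
      · show (0 : Fin m → ℝ) + 0 = sumAx A xbar - b + 0
        rw [hxbar_feas]; simp
      · show Gx xbar - p < Gx xbar - p + 1 + 1
        linarith
    have h2 := AffineSubspace.vsub_mem_direction (subset_affineSpan ℝ _ h1)
      (subset_affineSpan ℝ _ hq0M)
    rwa [vsub_eq_sub, add_sub_cancel_left] at h2
  have hS'dir : ∀ u' ∈ S', ((u', (0:ℝ)) : (Fin m → ℝ) × ℝ) ∈ T := by
    intro u' hu'
    have h1 : ((u', Gx xbar - p + 1) : (Fin m → ℝ) × ℝ) ∈ Mset := by
      refine ⟨xbar, hxbarD, u', hu', ?_, ?_⟩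
      · show u' = sumAx A xbar - b + u'
        rw [hxbar_feas]; simp
      · show Gx xbar - p < Gx xbar - p + 1
        linarith
    have h2 := AffineSubspace.vsub_mem_direction (subset_affineSpan ℝ _ h1)
      (subset_affineSpan ℝ _ hq0M)
    rw [vsub_eq_sub] at h2
    have h3 : ((u', Gx xbar - p + 1) : (Fin m → ℝ) × ℝ) - q0 = (u', 0) := by
      rw [hq0def, Prod.mk_sub_mk]
      simp
    rwa [h3] at h2
  have hSdir : ∀ w ∈ S, ((w, (0:ℝ)) : (Fin m → ℝ) × ℝ) ∈ T := by
    intro w hw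
    obtain ⟨c, hc0, x, hxD, hxw⟩ := hsmall w hw
    set K : ℝ := max (Gx xbar - p) (Gx x - p) + 1 with hK
    have h1 : ((c • w, K) : (Fin m → ℝ) × ℝ) ∈ Mset := by
      refine ⟨x, hxD, 0, S'.zero_mem, ?_, ?_⟩
      · show c • w = sumAx A x - b + 0
        rw [hxw]; simp
      · show Gx x - p < K
        have := le_max_right (Gx xbar - p) (Gx x - p)
        rw [hK]; linarith
    have h2 : ((0, K) : (Fin m → ℝ) × ℝ) ∈ Mset := by
      refine ⟨xbar, hxbarD, 0, S'.zero_mem, ?_, ?_⟩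
      · show (0 : Fin m → ℝ) = sumAx A xbar - b + 0
        rw [hxbar_feas]; simp
      · show Gx xbar - p < K
        have := le_max_left (Gx xbar - p) (Gx x - p)
        rw [hK]; linarith
    have h3 := AffineSubspace.vsub_mem_direction (subset_affineSpan ℝ _ h1)
      (subset_affineSpan ℝ _ h2)
    rw [vsub_eq_sub] at h3
    have h4 : ((c • w, K) : (Fin m → ℝ) × ℝ) - (0, K) = (c • w, 0) := by
      rw [Prod.mk_sub_mk]; simp
    rw [h4] at h3
    have h5 := T.smul_mem c⁻¹ h3
    rw [Prod.smul_mk, smul_smul, inv_mul_cancel₀ (ne_of_gt hc0), one_smul, smul_zero] at h5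
    exact h5
  have haff : affineSpan ℝ Mset = ⊤ := by
    rw [eq_top_iff]
    rintro q -
    have hdec : (S.linearProjOfIsCompl S' hcompl q.1 : Fin m → ℝ)
        + (S'.linearProjOfIsCompl S hcompl.symm q.1 : Fin m → ℝ) = q.1 :=
      Submodule.projection_add_projection_eq_self hcompl q.1
    set wS : Fin m → ℝ := (S.linearProjOfIsCompl S' hcompl q.1 : Fin m → ℝ) with hwS
    set wS' : Fin m → ℝ := (S'.linearProjOfIsCompl S hcompl.symm q.1 : Fin m → ℝ) with hwS'
    have hd : q - q0 = ((wS, (0:ℝ)) : (Fin m → ℝ) × ℝ) + (wS', 0)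
        + (q.2 - q0.2) • (((0 : Fin m → ℝ), (1:ℝ)) : (Fin m → ℝ) × ℝ) := by
      have h1 : (q - q0).1 = wS + wS' := by
        rw [hq0def]
        show q.1 - 0 = wS + wS'
        rw [sub_zero, ← hdec]
      have h2 : (q - q0).2 = q.2 - q0.2 := rfl
      apply Prod.ext
      · rw [h1]
        show wS + wS' = (wS + wS' + (q.2 - q0.2) • 0)
        simp
      · rw [h2]
        show q.2 - q0.2 = 0 + 0 + (q.2 - q0.2) * 1
        ring
    have hmemT : q - q0 ∈ T := by
      rw [hd]
      exact T.add_mem (T.add_mem (hSdir wS (Submodule.coe_mem _))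
        (hS'dir wS' (Submodule.coe_mem _))) (T.smul_mem _ hvert)
    have h6 := AffineSubspace.vadd_mem_of_mem_direction hmemT (subset_affineSpan ℝ _ hq0M)
    rwa [vadd_eq_add, sub_add_cancel] at h6
  -- separation
  have hint : (interior Mset).Nonempty := by
    rw [Convex.interior_nonempty_iff_affineSpan_eq_top hconvM]
    exact haff
  have h0int : ((0,0) : (Fin m → ℝ) × ℝ) ∉ interior Mset := fun hc => h0M (interior_subset hc)
  obtain ⟨F, hF⟩ := geometric_hahn_banach_open_point (hconvM.interior) isOpen_interior h0int
  have hF0 : F ((0,0) : (Fin m → ℝ) × ℝ) = 0 := by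
    have h1 : ((0,0) : (Fin m → ℝ) × ℝ) = 0 := rfl
    rw [h1, map_zero]
  have hFM : ∀ q ∈ Mset, F q ≤ 0 := by
    intro q hq
    obtain ⟨a0, ha0⟩ := hint
    apply le_of_forall_unit_lt (c := F q - F a0)
    intro t ht0 ht1
    have hcombo : t • a0 + (1 - t) • q ∈ interior Mset :=
      Convex.combo_interior_closure_mem_interior hconvM ha0 (subset_closure hq) ht0
        (by linarith) (by ring)
    have h1 := hF _ hcombo
    rw [hF0, map_add, _root_.map_smul, _root_.map_smul, smul_eq_mul, smul_eq_mul] at h1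
    nlinarith [h1]
  set γ : ℝ := F ((0 : Fin m → ℝ), (1:ℝ)) with hγdef
  have hFdec : ∀ (w : Fin m → ℝ) (r : ℝ), F (w, r) = F (w, 0) + r * γ := by
    intro w r
    have h1 : ((w, r) : (Fin m → ℝ) × ℝ) = (w, 0) + r • ((0 : Fin m → ℝ), (1:ℝ)) := by
      apply Prod.ext <;> simp
    rw [h1, map_add, _root_.map_smul, smul_eq_mul]
  have hvertK : ∀ K : ℝ, Gx xbar - p < K → F ((0 : Fin m → ℝ), K) ≤ 0 := by
    intro K hK
    apply hFM
    refine ⟨xbar, hxbarD, 0, S'.zero_mem, ?_, hK⟩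
    show (0 : Fin m → ℝ) = sumAx A xbar - b + 0
    rw [hxbar_feas]; simp
  have hγle : γ ≤ 0 := by
    by_contra hpos
    push_neg at hpos
    set K : ℝ := max (Gx xbar - p + 1) 1 with hKdef
    have hK1 : Gx xbar - p < K := lt_of_lt_of_le (by linarith) (le_max_left _ _)
    have h2 := hvertK K hK1
    rw [hFdec, hF0, zero_add] at h2
    have hK2 : (1:ℝ) ≤ K := le_max_right _ _
    nlinarith
  have hγ : γ < 0 := by
    rcases lt_or_eq_of_le hγle with h | h
    · exact h
    exfalso
    have hγ0 : γ = 0 := h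
    have hnegpair : ∀ w : Fin m → ℝ, ((-w, (0:ℝ)) : (Fin m → ℝ) × ℝ) = -((w, (0:ℝ))) := by
      intro w
      apply Prod.ext <;> simp
    have hgS' : ∀ u' ∈ S', F (u', (0:ℝ)) = 0 := by
      intro u' hu'
      have hFle : ∀ z ∈ S', F (z, (0:ℝ)) ≤ 0 := by
        intro z hz
        have h1 := hFM ((z, Gx xbar - p + 1)) (by
          refine ⟨xbar, hxbarD, z, hz, ?_, ?_⟩
          · show z = sumAx A xbar - b + z
            rw [hxbar_feas]; simp
          · show Gx xbar - p < Gx xbar - p + 1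
            linarith)
        rwa [hFdec, hγ0, mul_zero, add_zero] at h1
      have h1 := hFle u' hu'
      have h2 := hFle (-u') (S'.neg_mem hu')
      rw [hnegpair, map_neg] at h2
      linarith
    have hgS : ∀ w ∈ S, F (w, (0:ℝ)) = 0 := by
      have hle : ∀ w ∈ S, F (w, (0:ℝ)) ≤ 0 := by
        intro w hw
        obtain ⟨c, hc0, x, hxD, hxw⟩ := hsmall w hw
        have hmem : ((c • w, Gx x - p + 1) : (Fin m → ℝ) × ℝ) ∈ Mset := by
          refine ⟨x, hxD, 0, S'.zero_mem, ?_, ?_⟩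
          · show c • w = sumAx A x - b + 0
            rw [hxw]; simp
          · show Gx x - p < Gx x - p + 1
            linarith
        have h1 := hFM _ hmem
        rw [hFdec, hγ0, mul_zero, add_zero] at h1
        have h2 : ((c • w, (0:ℝ)) : (Fin m → ℝ) × ℝ) = c • ((w, (0:ℝ))) := by
          apply Prod.ext <;> simp
        rw [h2, _root_.map_smul, smul_eq_mul] at h1
        nlinarith
      intro w hw
      have h1 := hle w hw
      have h2 := hle (-w) (S.neg_mem hw)
      rw [hnegpair, map_neg] at h2
      linarith
    obtain ⟨a0, ha0⟩ := hint
    have hFa0 : F a0 < 0 := by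
      have h1 := hF a0 ha0
      rwa [hF0] at h1
    have hdec : (S.linearProjOfIsCompl S' hcompl a0.1 : Fin m → ℝ)
        + (S'.linearProjOfIsCompl S hcompl.symm a0.1 : Fin m → ℝ) = a0.1 :=
      Submodule.projection_add_projection_eq_self hcompl a0.1
    have hzero : F a0 = 0 := by
      have h1 : F a0 = F (a0.1, a0.2) := rfl
      rw [h1, hFdec, hγ0, mul_zero, add_zero, ← hdec]
      have h2 : (((S.linearProjOfIsCompl S' hcompl a0.1 : Fin m → ℝ)
            + (S'.linearProjOfIsCompl S hcompl.symm a0.1 : Fin m → ℝ), (0:ℝ))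
            : (Fin m → ℝ) × ℝ)
          = ((S.linearProjOfIsCompl S' hcompl a0.1 : Fin m → ℝ), (0:ℝ))
            + ((S'.linearProjOfIsCompl S hcompl.symm a0.1 : Fin m → ℝ), (0:ℝ)) := by
        apply Prod.ext <;> simp
      rw [h2, map_add, hgS _ (Submodule.coe_mem _), hgS' _ (Submodule.coe_mem _), add_zero]
    linarith
  -- conclusion
  refine ⟨hxstar_top, ?_⟩
  set yvec : Fin m → ℝ := fun r => F ((fun j => if r = j then 1 else 0), 0) with hyvec
  have hrep : ∀ w : Fin m → ℝ, F (w, (0:ℝ)) = w ⬝ᵥ yvec := by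
    intro w
    set ylin : (Fin m → ℝ) →ₗ[ℝ] ℝ :=
      (F : ((Fin m → ℝ) × ℝ) →ₗ[ℝ] ℝ).comp (LinearMap.inl ℝ (Fin m → ℝ) ℝ) with hylin
    have h1 : ylin w = F (w, 0) := rfl
    have h2 := LinearMap.pi_apply_eq_sum_univ ylin w
    rw [← h1, h2]
    rw [dotProduct]
    apply Finset.sum_congr rfl
    intro i _
    rw [smul_eq_mul]
    rfl
  refine ⟨(-γ)⁻¹ • yvec, ?_⟩
  intro x hx
  have hxD : x ∈ Dset := (objSum_ne_top_iff hf x).mpr hx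
  have hkey : F (sumAx A x - b, 0) + (Gx x - p) * γ ≤ 0 := by
    apply le_of_forall_unit_lt (c := -γ)
    intro t ht0 ht1
    have hmem : ((sumAx A x - b, Gx x - p + t) : (Fin m → ℝ) × ℝ) ∈ Mset := by
      refine ⟨x, hxD, 0, S'.zero_mem, by simp, ?_⟩
      show Gx x - p < Gx x - p + t
      linarith
    have h1 := hFM _ hmem
    rw [hFdec] at h1
    nlinarith [h1]
  have hneg : (0:ℝ) < -γ := by linarith
  have h2 : F (sumAx A x - b, 0) / (-γ) ≤ Gx x - p := by
    rw [div_le_iff₀ hneg]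
    nlinarith [hkey]
  have h3 : ((-γ)⁻¹ • yvec) ⬝ᵥ (sumAx A x - b) = F (sumAx A x - b, 0) / (-γ) := by
    rw [smul_dotProduct, smul_eq_mul, dotProduct_comm, ← hrep, div_eq_inv_mul]
  show p + ((-γ)⁻¹ • yvec) ⬝ᵥ (sumAx A x - b) ≤ Gx x
  linarith [h2, h3]

end Duality

section LimitPassage

lemma tendsto_blkx {wk : ℕ → FIdx n m → ℝ} {w : FIdx n m → ℝ}
    (h : Tendsto wk atTop (𝓝 w)) (i : Fin s) :
    Tendsto (fun k => blk (xpart (wk k)) i) atTop (𝓝 (blk (xpart w) i)) := by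
  rw [tendsto_pi_nhds] at h ⊢
  intro j
  exact h (Sum.inl ⟨i, j⟩)

lemma tendsto_ypart {wk : ℕ → FIdx n m → ℝ} {w : FIdx n m → ℝ}
    (h : Tendsto wk atTop (𝓝 w)) :
    Tendsto (fun k => ypart (wk k)) atTop (𝓝 (ypart w)) := by
  rw [tendsto_pi_nhds] at h ⊢
  intro r
  exact h (Sum.inr r)

lemma coord_sq_le {ι : Type*} [Fintype ι] [DecidableEq ι] (x : ι → ℝ) (q : ι) :
    (x q)^2 ≤ x ⬝ᵥ x := by
  rw [pow_two]
  exact Finset.single_le_sum (f := fun i => x i * x i)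
    (fun i _ => mul_self_nonneg (x i)) (Finset.mem_univ q)

lemma limit_VIat {f : ∀ i : Fin s, (Fin (n i) → ℝ) → EReal} {b : Fin m → ℝ}
    {α : Fin s → ℝ} {β : ℝ} (hf : ∀ i, ProperConvexLsc (f i))
    (hα : ∀ i, 0 < α i) (hβ : 0 < β)
    {ξk wk : ℕ → FIdx n m → ℝ} {ζ zbar : FIdx n m → ℝ}
    (hVI : ∀ j, VIat f b α β (ξk j) (wk j))
    (hξ : Tendsto ξk atTop (𝓝 ζ)) (hw : Tendsto wk atTop (𝓝 zbar)) :
    VIat f b α β ζ zbar := by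
  constructor
  · intro i
    have hlsc : LowerSemicontinuous (f i) := (hf i).2.2.1
    set xk : ℕ → Fin (n i) → ℝ := fun j => blk (xpart (wk j)) i with hxkdef
    set xinf : Fin (n i) → ℝ := blk (xpart zbar) i with hxinf
    have hxk : Tendsto xk atTop (𝓝 xinf) := tendsto_blkx hw i
    set ak : ℕ → ℝ := fun j => (f i (xk j)).toReal with hak
    have hval : ∀ j, f i (xk j) = ((ak j : ℝ) : EReal) :=
      fun j => (EReal.coe_toReal ((hVI j).1 i).1 ((hf i).2.1 _)).symm
    -- a generic bound statement for any u in the domain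
    have hmain : ∀ u : Fin (n i) → ℝ, f i u ≠ ⊤ →
        (f i xinf ≠ ⊤ ∧ (f i xinf).toReal
          ≤ (f i u).toReal
            - (β / α i) * ((blk (xpart ζ) i - xinf) ⬝ᵥ (u - xinf))) := by
      intro u hu
      set gu : ℝ := (f i u).toReal with hgu
      set ck : ℕ → ℝ := fun j => ((blk (xpart (ξk j)) i - xk j) ⬝ᵥ (u - xk j)) with hck
      set cinf : ℝ := ((blk (xpart ζ) i - xinf) ⬝ᵥ (u - xinf)) with hcinf
      have hcktend : Tendsto ck atTop (𝓝 cinf) :=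
        tendsto_dot ((tendsto_blkx hξ i).sub hxk) (tendsto_const_nhds.sub hxk)
      set B : ℝ := gu - (β / α i) * cinf with hB
      set bk : ℕ → ℝ := fun j => gu - (β / α i) * ck j with hbk
      have hbktend : Tendsto bk atTop (𝓝 B) :=
        tendsto_const_nhds.sub (hcktend.const_mul _)
      have hab : ∀ j, ak j ≤ bk j := by
        intro j
        have h1 := ((hVI j).1 i).2 u hu
        show ak j ≤ gu - (β / α i) * ck j
        rw [hak]
        linarith [h1]
      have hnetop : f i xinf ≠ ⊤ := by
        intro htop
        have hev := hlsc xinf ((B + 1 : ℝ) : EReal) (by show _ < f i xinf; rw [htop]; exact EReal.coe_lt_top _)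
        have hev2 : ∀ᶠ j in atTop, ((B + 1 : ℝ) : EReal) < f i (xk j) := hxk.eventually hev
        have hev3 : ∀ᶠ j in atTop, bk j < B + 1 :=
          hbktend.eventually_lt_const (by linarith)
        obtain ⟨j, h1, h2⟩ := (hev2.and hev3).exists
        rw [hval j, EReal.coe_lt_coe_iff] at h1
        linarith [hab j]
      refine ⟨hnetop, ?_⟩
      set l : ℝ := (f i xinf).toReal with hl
      have hlr : f i xinf = ((l : ℝ) : EReal) :=
        (EReal.coe_toReal hnetop ((hf i).2.1 _)).symm
      show l ≤ B
      apply le_of_forall_pos_le_add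
      intro ε hε
      have hev := hlsc xinf ((l - ε : ℝ) : EReal)
        (by show _ < f i xinf; rw [hlr]; exact_mod_cast (by linarith : l - ε < l))
      have hev2 : ∀ᶠ j in atTop, ((l - ε : ℝ) : EReal) < f i (xk j) := hxk.eventually hev
      have hev3 : ∀ᶠ j in atTop, l - ε ≤ bk j := by
        filter_upwards [hev2] with j h1
        rw [hval j, EReal.coe_lt_coe_iff] at h1
        linarith [hab j]
      have h4 : l - ε ≤ B := ge_of_tendsto hbktend hev3
      linarith
    have hd := hmain (blk (xpart (wk 0)) i) ((hVI 0).1 i).1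
    refine ⟨hd.1, fun u hu => ?_⟩
    have h5 := (hmain u hu).2
    linarith [h5]
  · have h1 : Tendsto (fun j => ypart (ξk j) - ypart (wk j)) atTop
        (𝓝 (ypart ζ - ypart zbar)) := (tendsto_ypart hξ).sub (tendsto_ypart hw)
    have h2 : (fun j => ypart (ξk j) - ypart (wk j)) = fun _ => β • b :=
      funext fun j => (hVI j).2
    rw [h2] at h1
    exact tendsto_nhds_unique h1 tendsto_const_nhds

end LimitPassage
/-- under Condition-M, the two-step scheme `v^{k+1} = T_ℳ(v^k, v^{k−1})`
converges to a fixed point of `𝒯 ∘ E`, and the `x`-part converges to a solution of (P). -/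
theorem scheme_converges_to_solution {s m : ℕ} {n : Fin s → ℕ}
    (f : ∀ i : Fin s, (Fin (n i) → ℝ) → EReal)
    (A : ∀ i : Fin s, Matrix (Fin m) (Fin (n i)) ℝ) (b : Fin m → ℝ)
    (hf : ∀ i, ProperConvexLsc (f i))
    (hb : RiCond f A b)
    (hsol : ∃ x : XIdx n → ℝ, IsSolution f A b x)
    (α : Fin s → ℝ) (hα : ∀ i, 0 < α i) (β : ℝ) (hβ : 0 < β)
    (M0 M1 M2 : Matrix (FIdx n m) (FIdx n m) ℝ)
    (hwd : TMWellDefined f A b α β M0 M1 M2)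
    (hM : ConditionM M0 M1 M2)
    (v : ℕ → FIdx n m → ℝ)
    (hrec : ∀ k : ℕ, isTM f A b α β M0 M1 M2 (v (k + 1)) (v k) (v (k + 2))) :
    ∃ L : FIdx n m → ℝ, Tendsto v atTop (nhds L) ∧
      isT f b α β ((Emat A α β).mulVec L) L ∧
      IsSolution f A b (xpart L) := by
  classical
  obtain ⟨hM012, hH, hρlt⟩ := hM
  set Hm : Matrix (FIdx n m) (FIdx n m) ℝ := M0 + M2 with hHm
  set ρ : ℝ := specNorm (psdSqrt hH.inv.posSemidef * M2 * psdSqrt hH.inv.posSemidef) with hρdef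
  have hρle : specNorm (psdSqrt hH.inv.posSemidef * M2 * psdSqrt hH.inv.posSemidef) ≤ ρ := le_refl _
  have hρ0 : 0 ≤ ρ := specNorm_nonneg _
  have hρhalf : ρ < 1/2 := hρlt
  have hM1eq : M1 = Hm - M2 - M2 := by rw [hHm, hM012]; abel
  -- per-step variational inequalities
  have hVIk : ∀ k, VIat f b α β ((Emat A α β - Rinv α β * M0).mulVec (v (k+2))
      + (Rinv α β * M1).mulVec (v (k+1)) + (Rinv α β * M2).mulVec (v k)) (v (k+2)) :=
    fun k => (isT_iff_VIat hf hα hβ _ _).mp (hrec k)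
  have hdomk : ∀ k, ∀ i, f i (blk (xpart (v (k+2))) i) ≠ ⊤ := fun k i => ((hVIk k).1 i).1
  -- duality: fixed-point inequality at vstar
  obtain ⟨xstar, hsol'⟩ := hsol
  obtain ⟨hxstar_top, ystar, hdual⟩ := exists_dual hf hb hsol'
  set vstar : FIdx n m → ℝ := glue xstar (-ystar) with hvstar
  have hAxstar : (bigA A).mulVec xstar = b := by
    rw [← sumAx_eq_mulVec]; exact hsol'.1
  have hFixstar : FixIneq f A b vstar := by
    refine ⟨fun i => hxstar_top i, ?_⟩
    intro u hu
    have hdot : ((SAmat A).mulVec vstar) ⬝ᵥ (u - vstar)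
        = ystar ⬝ᵥ (sumAx A (xpart u) - b) + b ⬝ᵥ (ypart u + ystar) := by
      rw [SAmat_mulVec, dot_sum_split]
      have hx1 : xpart (Sum.elim (fun q : XIdx n => -((((bigA A)ᵀ).mulVec (ypart vstar)) q))
          (fun r : Fin m => ((bigA A).mulVec (xpart vstar)) r))
          = -(((bigA A)ᵀ).mulVec (ypart vstar)) := rfl
      have hy1 : ypart (Sum.elim (fun q : XIdx n => -((((bigA A)ᵀ).mulVec (ypart vstar)) q))
          (fun r : Fin m => ((bigA A).mulVec (xpart vstar)) r))
          = (bigA A).mulVec (xpart vstar) := rfl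
      have hxv : xpart vstar = xstar := rfl
      have hyv : ypart vstar = -ystar := rfl
      rw [hx1, hy1, hxv, hyv, hAxstar, Matrix.mulVec_neg, neg_neg]
      have hx2 : xpart (u - vstar) = xpart u - xstar := rfl
      have hy2 : ypart (u - vstar) = ypart u - (-ystar) := rfl
      rw [hx2, hy2, sub_neg_eq_add]
      have h3 : (((bigA A)ᵀ).mulVec ystar) ⬝ᵥ (xpart u - xstar)
          = ystar ⬝ᵥ (sumAx A (xpart u) - b) := by
        rw [dot_mulVec_transpose, Matrix.transpose_transpose, Matrix.mulVec_sub, hAxstar,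
          ← sumAx_eq_mulVec]
      rw [h3]
    rw [hdot, PsiR, PsiR]
    have hxv : xpart vstar = xstar := rfl
    have hyv : ypart vstar = -ystar := rfl
    rw [hxv, hyv]
    have h4 := hdual (xpart u) hu
    have h5 : b ⬝ᵥ (ypart u + ystar) = (ypart u) ⬝ᵥ b + ystar ⬝ᵥ b := by
      rw [dotProduct_comm, add_dotProduct]
    have h6 : (-ystar) ⬝ᵥ b = -(ystar ⬝ᵥ b) := neg_dotProduct _ _
    rw [h5, h6]
    linarith [h4]
  -- raw inequalities w.r.t. vstar, first Lyapunov pass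
  have hraw1 : ∀ k, 0 ≤ (M1.mulVec (v (k+1) - v (k+2)) + M2.mulVec (v k - v (k+2)))
      ⬝ᵥ (v (k+2) - vstar) :=
    fun k => raw_step hα hβ hM012 (hVIk k) hFixstar.1 (hFixstar.2 (v (k+2)) (hdomk k))
  obtain ⟨hdesc1, hlow1⟩ := lyapunov_descent hH hM1eq hρle v vstar hraw1
  have hGnon1 : ∀ k, 0 ≤ GhatF Hm M2 ρ v vstar k := by
    intro k
    have h1 := hlow1 k
    have h2 := dotH_nonneg hH (v (k+1) - vstar)
    have h3 : (0:ℝ) ≤ (1-ρ)/2 := by linarith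
    nlinarith
  obtain ⟨hD1, hGh1bd⟩ := descent_summable (c := 1/2 - ρ)
    (G := GhatF Hm M2 ρ v vstar)
    (D := fun k => (v (k+1) - v k) ⬝ᵥ Hm.mulVec (v (k+1) - v k))
    (by linarith) hdesc1 (fun k => dotH_nonneg hH _) hGnon1
  set CQ2 : ℝ := (specNorm (psdSqrt hH.inv.posSemidef))^2 with hCQ2
  have hCQ2nn : 0 ≤ CQ2 := sq_nonneg _
  have hdiffcoord : ∀ (x : FIdx n m → ℝ) (q : FIdx n m),
      (x q)^2 ≤ CQ2 * (x ⬝ᵥ Hm.mulVec x) :=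
    fun x q => le_trans (coord_sq_le x q) (dot_le_specQ_sq hH x)
  have hdiff0 : Tendsto (fun k => v (k+1) - v k) atTop (𝓝 0) := by
    rw [tendsto_pi_nhds]
    intro q
    have hsq : Tendsto (fun k => ((v (k+1) - v k) q)^2) atTop (𝓝 0) := by
      have h5 := hD1.const_mul CQ2
      rw [mul_zero] at h5
      apply tendsto_of_tendsto_of_tendsto_of_le_of_le tendsto_const_nhds h5
      · exact fun k => sq_nonneg _
      · exact fun k => hdiffcoord _ q
    have h2 := sq_tendsto_zero hsq
    simpa using h2
  -- boundedness and subsequence extraction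
  have hbound : ∀ k, (v (k+1) - vstar) ⬝ᵥ Hm.mulVec (v (k+1) - vstar)
      ≤ 2 * GhatF Hm M2 ρ v vstar 0 / (1 - ρ) := by
    intro k
    have h1 := hlow1 k
    have h2 := hGh1bd k
    rw [le_div_iff₀ (by linarith : (0:ℝ) < 1 - ρ)]
    nlinarith
  set R : ℝ := max (dist (v 0) vstar)
      (Real.sqrt (CQ2 * (2 * GhatF Hm M2 ρ v vstar 0 / (1 - ρ)))) with hR
  have hmemball : ∀ k, v k ∈ Metric.closedBall vstar R := by
    intro k
    rw [Metric.mem_closedBall]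
    cases k with
    | zero => exact le_max_left _ _
    | succ j =>
      rw [dist_eq_norm]
      have hRnn : 0 ≤ R := le_trans dist_nonneg (le_max_left _ _)
      rw [pi_norm_le_iff_of_nonneg hRnn]
      intro q
      have h1 : ((v (j+1) - vstar) q)^2 ≤ CQ2 * (2 * GhatF Hm M2 ρ v vstar 0 / (1 - ρ)) := by
        have h2 := hdiffcoord (v (j+1) - vstar) q
        have h3 := hbound j
        nlinarith
      have h3 : ‖(v (j+1) - vstar) q‖
          ≤ Real.sqrt (CQ2 * (2 * GhatF Hm M2 ρ v vstar 0 / (1 - ρ))) := by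
        rw [Real.norm_eq_abs, ← Real.sqrt_sq_eq_abs]
        exact Real.sqrt_le_sqrt h1
      exact le_trans h3 (le_max_right _ _)
  obtain ⟨vbar, -, φ, hφmono, hφtend'⟩ :=
    tendsto_subseq_of_bounded Metric.isBounded_closedBall hmemball
  have hφtend : Tendsto (fun j => v (φ j)) atTop (𝓝 vbar) := hφtend'
  have hφatTop : Tendsto φ atTop atTop := hφmono.tendsto_atTop
  have hφ1 : Tendsto (fun j => v (φ j + 1)) atTop (𝓝 vbar) := by
    have h1 : Tendsto (fun j => v (φ j) + (v (φ j + 1) - v (φ j))) atTop (𝓝 (vbar + 0)) :=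
      hφtend.add (hdiff0.comp hφatTop)
    rw [add_zero] at h1
    have h2 : (fun j => v (φ j + 1)) = fun j => v (φ j) + (v (φ j + 1) - v (φ j)) := by
      funext j; abel
    rw [h2]; exact h1
  have hφ2 : Tendsto (fun j => v (φ j + 2)) atTop (𝓝 vbar) := by
    have hshift : Tendsto (fun j => φ j + 1) atTop atTop :=
      (tendsto_add_atTop_nat 1).comp hφatTop
    have h0 : Tendsto (fun j => v (φ j + 1 + 1) - v (φ j + 1)) atTop (𝓝 0) :=
      hdiff0.comp hshift
    have h1 : Tendsto (fun j => v (φ j + 1) + (v (φ j + 2) - v (φ j + 1))) atTop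
        (𝓝 (vbar + 0)) := hφ1.add h0
    rw [add_zero] at h1
    have h2 : (fun j => v (φ j + 2)) = fun j => v (φ j + 1) + (v (φ j + 2) - v (φ j + 1)) := by
      funext j; abel
    rw [h2]; exact h1
  -- limit of the prox inputs
  have hsumB : ∀ u : FIdx n m → ℝ, (Emat A α β - Rinv α β * M0).mulVec u
      + (Rinv α β * M1).mulVec u + (Rinv α β * M2).mulVec u = (Emat A α β).mulVec u := by
    intro u
    rw [Matrix.sub_mulVec, hM012, Matrix.mul_add, Matrix.add_mulVec]
    abel
  have hξtend : Tendsto (fun j => (Emat A α β - Rinv α β * M0).mulVec (v (φ j + 2))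
      + (Rinv α β * M1).mulVec (v (φ j + 1)) + (Rinv α β * M2).mulVec (v (φ j)))
      atTop (𝓝 ((Emat A α β).mulVec vbar)) := by
    rw [← hsumB vbar]
    exact ((tendsto_mulVec _ hφ2).add (tendsto_mulVec _ hφ1)).add (tendsto_mulVec _ hφtend)
  have hVIbar : VIat f b α β ((Emat A α β).mulVec vbar) vbar :=
    limit_VIat hf hα hβ (fun j => hVIk (φ j)) hξtend hφ2
  have hFixbar := FixIneq_of_VIat hα hβ hVIbar
  -- second Lyapunov pass, with vbar
  have hraw2 : ∀ k, 0 ≤ (M1.mulVec (v (k+1) - v (k+2)) + M2.mulVec (v k - v (k+2)))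
      ⬝ᵥ (v (k+2) - vbar) :=
    fun k => raw_step hα hβ hM012 (hVIk k) hFixbar.1 (hFixbar.2 (v (k+2)) (hdomk k))
  obtain ⟨hdesc2, hlow2⟩ := lyapunov_descent hH hM1eq hρle v vbar hraw2
  have hGnon2 : ∀ k, 0 ≤ GhatF Hm M2 ρ v vbar k := by
    intro k
    have h1 := hlow2 k
    have h2 := dotH_nonneg hH (v (k+1) - vbar)
    have h3 : (0:ℝ) ≤ (1-ρ)/2 := by linarith
    nlinarith
  have hmono2 : ∀ k, GhatF Hm M2 ρ v vbar (k+1) ≤ GhatF Hm M2 ρ v vbar k := by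
    intro k
    have h1 := hdesc2 k
    have h2 := dotH_nonneg hH (v (k+2) - v (k+1))
    nlinarith
  have he1sub : Tendsto (fun j => v (φ j + 1) - vbar) atTop (𝓝 0) := by
    have h1 := hφ1.sub (tendsto_const_nhds (x := vbar) (f := atTop))
    rwa [sub_self] at h1
  have hdsub : Tendsto (fun j => v (φ j + 1) - v (φ j)) atTop (𝓝 0) := hdiff0.comp hφatTop
  have hGh2sub : Tendsto (fun j => GhatF Hm M2 ρ v vbar (φ j)) atTop (𝓝 0) := by
    have hterm1 : Tendsto (fun j => (v (φ j + 1) - vbar) ⬝ᵥ Hm.mulVec (v (φ j + 1) - vbar))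
        atTop (𝓝 0) := by
      have h1 := tendsto_dot he1sub (tendsto_mulVec Hm he1sub)
      simpa using h1
    have hterm2 : Tendsto
        (fun j => (M2.mulVec (v (φ j + 1) - v (φ j))) ⬝ᵥ (v (φ j + 1) - vbar))
        atTop (𝓝 0) := by
      have h1 := tendsto_dot (tendsto_mulVec M2 hdsub) he1sub
      simpa using h1
    have hterm3 : Tendsto
        (fun j => (v (φ j + 1) - v (φ j)) ⬝ᵥ Hm.mulVec (v (φ j + 1) - v (φ j)))
        atTop (𝓝 0) := by
      have h1 := tendsto_dot hdsub (tendsto_mulVec Hm hdsub)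
      simpa using h1
    have hcomb := ((hterm1.const_mul ((1:ℝ)/2)).sub hterm2).add (hterm3.const_mul (ρ/2))
    have heq : (fun j => GhatF Hm M2 ρ v vbar (φ j))
        = (fun j => (1/2) * ((v (φ j + 1) - vbar) ⬝ᵥ Hm.mulVec (v (φ j + 1) - vbar))
          - (M2.mulVec (v (φ j + 1) - v (φ j))) ⬝ᵥ (v (φ j + 1) - vbar)
          + (ρ/2) * ((v (φ j + 1) - v (φ j)) ⬝ᵥ Hm.mulVec (v (φ j + 1) - v (φ j)))) := rfl
    rw [heq]
    simpa using hcomb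
  have hGh2to0 : Tendsto (GhatF Hm M2 ρ v vbar) atTop (𝓝 0) :=
    tendsto_zero_of_antitone_cluster hmono2 hGnon2 hφmono hGh2sub
  have hnHto0 : Tendsto (fun k => (v (k+1) - vbar) ⬝ᵥ Hm.mulVec (v (k+1) - vbar))
      atTop (𝓝 0) := by
    have h5 := hGh2to0.const_mul (2/(1-ρ))
    rw [mul_zero] at h5
    apply tendsto_of_tendsto_of_tendsto_of_le_of_le tendsto_const_nhds h5
    · exact fun k => dotH_nonneg hH _
    · intro k
      show (v (k+1) - vbar) ⬝ᵥ Hm.mulVec (v (k+1) - vbar)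
          ≤ 2/(1-ρ) * GhatF Hm M2 ρ v vbar k
      have h1 := hlow2 k
      have h2 : (0:ℝ) < 1 - ρ := by linarith
      have h3 : (2/(1-ρ)) * GhatF Hm M2 ρ v vbar k
          = 2 * GhatF Hm M2 ρ v vbar k / (1-ρ) := by ring
      rw [h3, le_div_iff₀ h2]
      nlinarith
  have hvtend : Tendsto v atTop (𝓝 vbar) := by
    have h1 : Tendsto (fun k => v (k+1)) atTop (𝓝 vbar) := by
      rw [tendsto_pi_nhds]
      intro q
      have hsq : Tendsto (fun k => ((v (k+1) - vbar) q)^2) atTop (𝓝 0) := by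
        have h5 := hnHto0.const_mul CQ2
        rw [mul_zero] at h5
        apply tendsto_of_tendsto_of_tendsto_of_le_of_le tendsto_const_nhds h5
        · exact fun k => sq_nonneg _
        · exact fun k => hdiffcoord _ q
      have h2 := sq_tendsto_zero hsq
      have h3 : Tendsto (fun k => vbar q + (v (k+1) - vbar) q) atTop (𝓝 (vbar q + 0)) :=
        tendsto_const_nhds.add h2
      rw [add_zero] at h3
      have h4 : (fun k => v (k+1) q) = fun k => vbar q + (v (k+1) - vbar) q := by
        funext k
        rw [Pi.sub_apply]
        ring
      rw [h4]; exact h3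
    exact (tendsto_add_atTop_iff_nat 1).mp h1
  -- feasibility of xpart vbar
  have hfeasbar : sumAx A (xpart vbar) = b := by
    have hy := hVIbar.2
    funext r
    have h2 := congrFun hy r
    rw [Pi.sub_apply] at h2
    have h2b : (β • b) r = β * b r := rfl
    have h3 : ypart ((Emat A α β).mulVec vbar) r
        = β * ((bigA A).mulVec (xpart vbar)) r + vbar (Sum.inr r) := by
      show ((Emat A α β).mulVec vbar) (Sum.inr r) = _
      rw [Emat_mulVec]
      rfl
    have h4 : ypart vbar r = vbar (Sum.inr r) := rfl
    rw [h3, h4, h2b] at h2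
    have h5 : β * ((bigA A).mulVec (xpart vbar)) r = β * b r := by linarith
    have h6 := mul_left_cancel₀ (ne_of_gt hβ) h5
    rw [sumAx_eq_mulVec]
    exact h6
  refine ⟨vbar, hvtend, (isT_iff_VIat hf hα hβ _ _).mpr hVIbar, hfeasbar, ?_⟩
  -- optimality
  intro z hz
  by_cases hzdom : objSum f z = ⊤
  · rw [hzdom]; exact le_top
  · have hzblk := (objSum_ne_top_iff hf z).mp hzdom
    set u : FIdx n m → ℝ := glue z (ypart vbar) with hu
    have hub : ∀ i, f i (blk (xpart u) i) ≠ ⊤ := hzblk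
    have h1 := hFixbar.2 u hub
    have hdot0 : ((SAmat A).mulVec vbar) ⬝ᵥ (u - vbar) = 0 := by
      rw [SAmat_mulVec, dot_sum_split]
      have hx1 : xpart (Sum.elim (fun q : XIdx n => -((((bigA A)ᵀ).mulVec (ypart vbar)) q))
          (fun r : Fin m => ((bigA A).mulVec (xpart vbar)) r))
          = -(((bigA A)ᵀ).mulVec (ypart vbar)) := rfl
      have hy1 : ypart (Sum.elim (fun q : XIdx n => -((((bigA A)ᵀ).mulVec (ypart vbar)) q))
          (fun r : Fin m => ((bigA A).mulVec (xpart vbar)) r))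
          = (bigA A).mulVec (xpart vbar) := rfl
      rw [hx1, hy1]
      have hy0 : ypart (u - vbar) = 0 := by
        funext r
        show ypart vbar r - vbar (Sum.inr r) = 0
        show vbar (Sum.inr r) - vbar (Sum.inr r) = 0
        ring
      have hx0 : xpart (u - vbar) = z - xpart vbar := rfl
      rw [hy0, hx0, dotProduct_zero, add_zero, neg_dotProduct, dot_mulVec_transpose,
        Matrix.transpose_transpose, Matrix.mulVec_sub]
      have hAz : (bigA A).mulVec z = b := by rw [← sumAx_eq_mulVec]; exact hz
      have hAvb : (bigA A).mulVec (xpart vbar) = b := by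
        rw [← sumAx_eq_mulVec]; exact hfeasbar
      rw [hAz, hAvb, sub_self, dotProduct_zero, neg_zero]
    rw [hdot0, add_zero, PsiR, PsiR] at h1
    have hyu : ypart u = ypart vbar := rfl
    have hxu : xpart u = z := rfl
    rw [hyu, hxu] at h1
    rw [objSum_eq_coe hf hFixbar.1, objSum_eq_coe hf hzblk, EReal.coe_le_coe_iff]
    linarith

end
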